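/- arXiv:1510.07919 — 3 statements merged into one kernel-verified Lean document; each statement's English description precedes it below -/
import Mathlib

section
/- Let N be a near hexagon of order (2,2). If N has 63 points, then any two points of N at distance 2 have exactly one common neighbor, so N is a generalized hexagon of order (2,2); if N has 27 points, then any two points of N at distance 2 have exactly two common neighbors. -/
/-- The collinearity graph of a point-line geometry whose lines are given as
sets of points: two points are adjacent when they are distinct and lie on a
common line. -/
def collGraph {P : Type*} (Lines : Set (Set P)) : SimpleGraph P where
  Adj x y := x ≠ y ∧ ∃ L ∈ Lines, x ∈ L ∧ y ∈ L
  symm := by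
    constructor
    rintro x y ⟨hxy, L, hL, hx, hy⟩
    exact ⟨hxy.symm, L, hL, hy, hx⟩
  loopless := by
    constructor
    rintro x ⟨h, -⟩
    exact h rfl

/-- A near `2d`-gon: a partial linear space (every line carries at least two
points, two distinct points lie on at most one common line) whose collinearity
graph is connected of diameter `d`, and in which for every point `x` and every
line `L` there is a unique point of `L` nearest to `x`.  A near hexagon is a
`NearPolygon P 3`, a near octagon is a `NearPolygon P 4`. -/
structure NearPolygon (P : Type*) (d : ℕ) where
  Lines : Set (Set P)
  two_pts : ∀ L ∈ Lines, ∃ x ∈ L, ∃ y ∈ L, x ≠ y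
  unique_line : ∀ L₁ ∈ Lines, ∀ L₂ ∈ Lines, ∀ x y : P,
    x ≠ y → x ∈ L₁ → y ∈ L₁ → x ∈ L₂ → y ∈ L₂ → L₁ = L₂
  connected : (collGraph Lines).Connected
  diam_le : ∀ x y : P, (collGraph Lines).dist x y ≤ d
  diam_eq : ∃ x y : P, (collGraph Lines).dist x y = d
  near : ∀ (x : P), ∀ L ∈ Lines, ∃! y, y ∈ L ∧
    ∀ z ∈ L, (collGraph Lines).dist x y ≤ (collGraph Lines).dist x z

/-- A near polygon has order `(s,t)` if every line is incident with exactly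
`s+1` points and every point is incident with exactly `t+1` lines. -/
def NearPolygon.hasOrder {P : Type*} {d : ℕ} (N : NearPolygon P d) (s t : ℕ) : Prop :=
  (∀ L ∈ N.Lines, L.ncard = s + 1) ∧
  (∀ x : P, {L | L ∈ N.Lines ∧ x ∈ L}.ncard = t + 1)

/-- A semi-valuation: every line `L` contains a unique point `xL` such that
every other point of `L` has value `f xL + 1`. -/
def IsSemiValuation {P : Type*} (Lines : Set (Set P)) (f : P → ℤ) : Prop :=
  ∀ L ∈ Lines, ∃! xL, xL ∈ L ∧ ∀ x ∈ L, x ≠ xL → f x = f xL + 1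

/-- A valuation: a semi-valuation whose minimum value is `0`. -/
def IsValuation {P : Type*} (Lines : Set (Set P)) (f : P → ℤ) : Prop :=
  IsSemiValuation Lines f ∧ (∀ x, 0 ≤ f x) ∧ (∃ x, f x = 0)

/-- `ι` realizes the geometry with lines `LQ` as a full isometrically embedded
subgeometry of the geometry with lines `LP` (lines being identified with their
point sets, fullness amounts to lines mapping onto lines). -/
structure IsFullIsomEmb {Q P : Type*} (LQ : Set (Set Q)) (LP : Set (Set P))
    (ι : Q → P) : Prop where
  inj : Function.Injective ι
  line_map : ∀ L ∈ LQ, ι '' L ∈ LP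
  isometric : ∀ x y : Q, (collGraph LP).dist (ι x) (ι y) = (collGraph LQ).dist x y

/-- The distance `d(x, P)` from a point `x` of the ambient geometry to the
point set of the embedded subgeometry. -/
noncomputable def distToSub {Q P : Type*} (LP : Set (Set P)) (ι : Q → P) (x : P) : ℕ :=
  sInf (Set.range fun z : Q => (collGraph LP).dist x (ι z))

/-- The function `f_x : y ↦ d(x, y) - d(x, P)` induced on the embedded
subgeometry by a point `x` of the ambient geometry. -/
noncomputable def inducedVal {Q P : Type*} (LP : Set (Set P)) (ι : Q → P) (x : P) :
    Q → ℤ :=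
  fun y => ((collGraph LP).dist x (ι y) : ℤ) - (distToSub LP ι x : ℤ)

/-- Two valuations are neighboring if `|f1 x - f2 x + ε| ≤ 1` for all `x`,
for some integer `ε`. -/
def Neighboring {P : Type*} (f1 f2 : P → ℤ) : Prop :=
  ∃ ε : ℤ, ∀ x, |f1 x - f2 x + ε| ≤ 1

/-- The semi-valuation `f3'` built from two neighboring valuations `f1, f2`
and a compatible `ε`. -/
def starFun {P : Type*} (f1 f2 : P → ℤ) (ε : ℤ) (x : P) : ℤ :=
  if f1 x = f2 x - ε then f1 x - 1 else max (f1 x) (f2 x - ε)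

/-- `StarRel f1 f2 f3` expresses `f1 * f2 = f3`: some `ε ∈ {-1,0,1}` witnesses
that `f1` and `f2` are neighboring, and, for every such `ε`, subtracting the
minimum value `m` of `f3' = starFun f1 f2 ε` from `f3'` yields `f3`. -/
def StarRel {P : Type*} (f1 f2 f3 : P → ℤ) : Prop :=
  (∃ ε ∈ ({-1, 0, 1} : Set ℤ), ∀ x, |f1 x - f2 x + ε| ≤ 1) ∧
  ∀ ε ∈ ({-1, 0, 1} : Set ℤ), (∀ x, |f1 x - f2 x + ε| ≤ 1) →
    ∃ m : ℤ, IsLeast (Set.range (starFun f1 f2 ε)) m ∧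
      ∀ x, f3 x = starFun f1 f2 ε x - m

/-- A subspace: together with two distinct collinear points it contains every
line through them. -/
def IsSubspace {P : Type*} (Lines : Set (Set P)) (X : Set P) : Prop :=
  ∀ L ∈ Lines, ∀ x ∈ L, ∀ y ∈ L, x ≠ y → x ∈ X → y ∈ X → L ⊆ X

/-- A convex subspace: a subspace containing every point on a shortest path
between any two of its points. -/
def IsConvexSubspace {P : Type*} (Lines : Set (Set P)) (X : Set P) : Prop :=
  IsSubspace Lines X ∧
  ∀ x ∈ X, ∀ y ∈ X, ∀ z : P,
    (collGraph Lines).dist x z + (collGraph Lines).dist z y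
      = (collGraph Lines).dist x y → z ∈ X

/-- A quad: a convex subspace of diameter `2` inducing (with the lines fully
contained in it) a nondegenerate generalized quadrangle. -/
def IsQuad {P : Type*} (Lines : Set (Set P)) (Q : Set P) : Prop :=
  IsConvexSubspace Lines Q ∧
  (∀ x ∈ Q, ∀ y ∈ Q, (collGraph Lines).dist x y ≤ 2) ∧
  (∃ x ∈ Q, ∃ y ∈ Q, (collGraph Lines).dist x y = 2) ∧
  (∀ x ∈ Q, ∀ L ∈ Lines, L ⊆ Q → x ∉ L →
    ∃! y, y ∈ L ∧ (collGraph Lines).Adj x y) ∧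
  (∀ x ∈ Q, ∃ L₁ ∈ Lines, ∃ L₂ ∈ Lines,
    L₁ ⊆ Q ∧ L₂ ⊆ Q ∧ x ∈ L₁ ∧ x ∈ L₂ ∧ L₁ ≠ L₂) ∧
  (∃ x ∈ Q, ∃ y ∈ Q, x ≠ y ∧ ¬ (collGraph Lines).Adj x y)

/-- A quad has order `(s,t')` if each of its lines has `s+1` points and each
of its points is on exactly `t'+1` lines contained in the quad. -/
def QuadHasOrder {P : Type*} (Lines : Set (Set P)) (Q : Set P) (s t' : ℕ) : Prop :=
  (∀ L ∈ Lines, L ⊆ Q → L.ncard = s + 1) ∧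
  (∀ x ∈ Q, {L | L ∈ Lines ∧ L ⊆ Q ∧ x ∈ L}.ncard = t' + 1)

namespace NHX

open SimpleGraph Set

section Generic
variable {α : Type*}

lemma three_enum {s : Set α} (h : s.ncard = 3) :
    ∃ a b c, a ∈ s ∧ b ∈ s ∧ c ∈ s ∧ a ≠ b ∧ a ≠ c ∧ b ≠ c ∧
      ∀ d ∈ s, d = a ∨ d = b ∨ d = c := by
  obtain ⟨a, b, c, hab, hac, hbc, rfl⟩ := Set.ncard_eq_three.mp h
  refine ⟨a, b, c, by simp, by simp, by simp, hab, hac, hbc, ?_⟩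
  intro d hd
  simpa using hd

lemma three_enum_one {s : Set α} (h : s.ncard = 3) {a : α} (ha : a ∈ s) :
    ∃ b c, b ∈ s ∧ c ∈ s ∧ b ≠ a ∧ c ≠ a ∧ b ≠ c ∧
      ∀ d ∈ s, d = a ∨ d = b ∨ d = c := by
  obtain ⟨p, q, r, hp, hq, hr, hpq, hpr, hqr, hex⟩ := three_enum h
  rcases hex a ha with rfl | rfl | rfl
  · exact ⟨q, r, hq, hr, hpq.symm, hpr.symm, hqr, hex⟩
  · exact ⟨p, r, hp, hr, hpq, hqr.symm, hpr, fun d hd => by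
      rcases hex d hd with h1 | h1 | h1 <;> tauto⟩
  · exact ⟨p, q, hp, hq, hpr, hqr, hpq, fun d hd => by
      rcases hex d hd with h1 | h1 | h1 <;> tauto⟩

lemma three_enum_two {s : Set α} (h : s.ncard = 3) {a b : α} (ha : a ∈ s) (hb : b ∈ s)
    (hab : a ≠ b) :
    ∃ c, c ∈ s ∧ c ≠ a ∧ c ≠ b ∧ ∀ d ∈ s, d = a ∨ d = b ∨ d = c := by
  obtain ⟨p, q, hp, hq, hpa, hqa, hpq, hex⟩ := three_enum_one h ha
  rcases hex b hb with rfl | rfl | rfl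
  · exact absurd rfl hab
  · exact ⟨q, hq, hqa, hpq.symm, fun d hd => by
      rcases hex d hd with h1 | h1 | h1 <;> tauto⟩
  · exact ⟨p, hp, hpa, hpq, fun d hd => by
      rcases hex d hd with h1 | h1 | h1 <;> tauto⟩

end Generic

section Geometry
variable {P : Type*} {N : NearPolygon P 3}

lemma adj_line {L : Set P} (hL : L ∈ N.Lines) {a b : P} (ha : a ∈ L) (hb : b ∈ L)
    (hab : a ≠ b) : (collGraph N.Lines).Adj a b :=
  ⟨hab, L, hL, ha, hb⟩

lemma dist_eq_zero_iff {a b : P} (N : NearPolygon P 3) :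
    (collGraph N.Lines).dist a b = 0 ↔ a = b :=
  N.connected.dist_eq_zero_iff

/-- On every line, there is a point `m` such that every other point of the line is at
distance `d(x,m) + 1` from `x`. -/
lemma profile {L : Set P} (hL : L ∈ N.Lines) (x : P) :
    ∃ m ∈ L, ∀ z ∈ L, z ≠ m →
      (collGraph N.Lines).dist x z = (collGraph N.Lines).dist x m + 1 := by
  obtain ⟨m, ⟨hmL, hmin⟩, huniq⟩ := N.near x L hL
  refine ⟨m, hmL, fun z hz hzm => ?_⟩
  have hadj : (collGraph N.Lines).Adj m z := adj_line hL hmL hz (Ne.symm hzm)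
  have h1 : (collGraph N.Lines).dist x z ≤ (collGraph N.Lines).dist x m + 1 := by
    have := N.connected.dist_triangle (u := x) (v := m) (w := z)
    rwa [SimpleGraph.dist_eq_one_iff_adj.mpr hadj] at this
  have h2 : (collGraph N.Lines).dist x m ≤ (collGraph N.Lines).dist x z := hmin z hz
  rcases Nat.lt_or_ge ((collGraph N.Lines).dist x z) ((collGraph N.Lines).dist x m + 1) with h | h
  · exfalso
    have heq : (collGraph N.Lines).dist x z = (collGraph N.Lines).dist x m := by omega
    exact hzm (huniq z ⟨hz, fun w hw => heq ▸ hmin w hw⟩)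
  · omega

/-- If `a, b, c` enumerate a line and `d(x,a) = d(x,b)` then `d(x,c) + 1 = d(x,a)`. -/
lemma eval_eq {L : Set P} (hL : L ∈ N.Lines) {x a b c : P}
    (ha : a ∈ L) (hb : b ∈ L) (hc : c ∈ L)
    (hex : ∀ p ∈ L, p = a ∨ p = b ∨ p = c)
    (hab : a ≠ b) (hac : a ≠ c) (hbc : b ≠ c)
    (hd : (collGraph N.Lines).dist x a = (collGraph N.Lines).dist x b) :
    (collGraph N.Lines).dist x c + 1 = (collGraph N.Lines).dist x a := by
  obtain ⟨m, hm, hprof⟩ := profile hL x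
  rcases hex m hm with rfl | rfl | rfl
  · have := hprof b hb hab.symm; omega
  · have := hprof a ha hab; omega
  · have h1 := hprof a ha hac
    omega

/-- If `a, b, c` enumerate a line, `d(x,a) = 1`, `d(x,b) = 2`, then `d(x,c) = 2`. -/
lemma eval_12 {L : Set P} (hL : L ∈ N.Lines) {x a b c : P}
    (ha : a ∈ L) (hb : b ∈ L) (hc : c ∈ L)
    (hex : ∀ p ∈ L, p = a ∨ p = b ∨ p = c)
    (hab : a ≠ b) (hac : a ≠ c) (hbc : b ≠ c)
    (h1 : (collGraph N.Lines).dist x a = 1) (h2 : (collGraph N.Lines).dist x b = 2) :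
    (collGraph N.Lines).dist x c = 2 := by
  obtain ⟨m, hm, hprof⟩ := profile hL x
  rcases hex m hm with rfl | rfl | rfl
  · have := hprof c hc (Ne.symm hac); omega
  · have := hprof a ha hab; omega
  · have ha' := hprof a ha hac
    have hb' := hprof b hb hbc
    omega

lemma dist_eq_two_of {a b c : P} (N : NearPolygon P 3) (hne : a ≠ b)
    (hnadj : ¬ (collGraph N.Lines).Adj a b)
    (h1 : (collGraph N.Lines).Adj a c) (h2 : (collGraph N.Lines).Adj c b) :
    (collGraph N.Lines).dist a b = 2 := by
  have hle : (collGraph N.Lines).dist a b ≤ 2 := by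
    have := N.connected.dist_triangle (u := a) (v := c) (w := b)
    rwa [SimpleGraph.dist_eq_one_iff_adj.mpr h1, SimpleGraph.dist_eq_one_iff_adj.mpr h2] at this
  have h0 : (collGraph N.Lines).dist a b ≠ 0 := fun h => hne ((dist_eq_zero_iff N).mp h)
  have h1' : (collGraph N.Lines).dist a b ≠ 1 := fun h =>
    hnadj (SimpleGraph.dist_eq_one_iff_adj.mp h)
  omega

lemma midpoint_of_dist_two {x p : P} (N : NearPolygon P 3)
    (h : (collGraph N.Lines).dist x p = 2) :
    ∃ c, (collGraph N.Lines).Adj x c ∧ (collGraph N.Lines).Adj c p := by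
  obtain ⟨w, hw⟩ := SimpleGraph.exists_walk_of_dist_ne_zero (by omega :
    (collGraph N.Lines).dist x p ≠ 0)
  rw [h] at hw
  cases w with
  | nil => simp at hw
  | cons hadj w' =>
    cases w' with
    | nil => simp at hw
    | cons hadj2 w'' =>
      cases w'' with
      | nil => exact ⟨_, hadj, hadj2⟩
      | cons h3 w3 => simp at hw

end Geometry
end NHX
namespace NHX
open SimpleGraph Set

section Counting
variable {P : Type*} {N : NearPolygon P 3}

lemma third_point (hord : N.hasOrder 2 2) {L : Set P} (hL : L ∈ N.Lines) {a b : P}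
    (ha : a ∈ L) (hb : b ∈ L) (hab : a ≠ b) :
    ∃ c, c ∈ L ∧ c ≠ a ∧ c ≠ b ∧ ∀ p ∈ L, p = a ∨ p = b ∨ p = c :=
  three_enum_two (hord.1 L hL) ha hb hab

lemma line_unique {L L' : Set P} (hL : L ∈ N.Lines) (hL' : L' ∈ N.Lines) {a b : P}
    (hab : a ≠ b) (ha : a ∈ L) (hb : b ∈ L) (ha' : a ∈ L') (hb' : b ∈ L') : L = L' :=
  N.unique_line L hL L' hL' a b hab ha hb ha' hb'

lemma dist_on_far_line {x z p : P} {L : Set P} (hL : L ∈ N.Lines)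
    (hz : (collGraph N.Lines).dist x z = 1) (hzL : z ∈ L) (hxL : x ∉ L)
    (hp : p ∈ L) (hpz : p ≠ z) : (collGraph N.Lines).dist x p = 2 := by
  obtain ⟨m, hm, hprof⟩ := profile hL x
  by_cases hmz : m = z
  · subst hmz
    have := hprof p hp hpz
    omega
  · have h1 := hprof z hzL (fun h => hmz h.symm)
    have h0 : (collGraph N.Lines).dist x m = 0 := by omega
    exact absurd ((dist_eq_zero_iff N).mp h0 ▸ hm) hxL

lemma not_mem_line_cn {x y z z' u : P} {L : Set P} (hxy : x ≠ y) (hL : L ∈ N.Lines)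
    (hxL : x ∈ L) (hzL : z ∈ L) (huL : u ∈ L)
    (hex : ∀ p ∈ L, p = x ∨ p = z ∨ p = u)
    (hxz : x ≠ z) (hxu : x ≠ u) (hzu : z ≠ u)
    (hzy : (collGraph N.Lines).Adj z y) (hz'y : (collGraph N.Lines).Adj z' y)
    (hz'x : (collGraph N.Lines).Adj x z') (hne : z' ≠ z) : z' ∉ L := by
  intro hz'L
  rcases hex z' hz'L with rfl | rfl | rfl
  · exact hz'x.ne rfl
  · exact hne rfl
  · have h := eval_eq hL (x := y) hzL hz'L hxL
      (fun p hp => by rcases hex p hp with h | h | h <;> tauto)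
      hzu (Ne.symm hxz) (Ne.symm hxu)
      (by rw [dist_eq_one_iff_adj.mpr hzy.symm, dist_eq_one_iff_adj.mpr hz'y.symm])
    rw [dist_eq_one_iff_adj.mpr hzy.symm] at h
    have h0 : (collGraph N.Lines).dist y x = 0 := by omega
    exact hxy ((dist_eq_zero_iff N).mp h0).symm

lemma nonadj_sep (hord : N.hasOrder 2 2) {p a b : P} {La Lb : Set P}
    (hLa : La ∈ N.Lines) (hLb : Lb ∈ N.Lines) (hLL : La ≠ Lb)
    (hpa : p ∈ La) (hpb : p ∈ Lb) (haL : a ∈ La) (hbL : b ∈ Lb)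
    (hap : a ≠ p) (hbp : b ≠ p) : ¬ (collGraph N.Lines).Adj a b := by
  intro hadj
  obtain ⟨hab, L', hL', haL', hbL'⟩ := hadj
  by_cases hpL' : p ∈ L'
  · have e1 : L' = La := line_unique hL' hLa hap.symm hpL' haL' hpa haL
    have e2 : L' = Lb := line_unique hL' hLb hbp.symm hpL' hbL' hpb hbL
    exact hLL (e1 ▸ e2)
  · obtain ⟨t, htL, hta, htb, hex⟩ := third_point hord hL' haL' hbL' hab
    have hpa' : (collGraph N.Lines).Adj p a := adj_line hLa hpa haL hap.symm
    have hpb' : (collGraph N.Lines).Adj p b := adj_line hLb hpb hbL hbp.symm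
    have h := eval_eq hL' (x := p) haL' hbL' htL hex hab (Ne.symm hta) (Ne.symm htb)
      (by rw [dist_eq_one_iff_adj.mpr hpa', dist_eq_one_iff_adj.mpr hpb'])
    rw [dist_eq_one_iff_adj.mpr hpa'] at h
    have h0 : (collGraph N.Lines).dist p t = 0 := by omega
    exact hpL' ((dist_eq_zero_iff N).mp h0 ▸ htL)

lemma sphere1_ncard (hord : N.hasOrder 2 2) (x : P) :
    {c | (collGraph N.Lines).dist x c = 1}.ncard = 6 := by
  obtain ⟨A, B, C, hA, hB, hC, hAB, hAC, hBC, hexL⟩ := three_enum (hord.2 x)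
  obtain ⟨a1, a2, ha1, ha2, ha1x, ha2x, ha12, hexA⟩ := three_enum_one (hord.1 A hA.1) hA.2
  obtain ⟨b1, b2, hb1, hb2, hb1x, hb2x, hb12, hexB⟩ := three_enum_one (hord.1 B hB.1) hB.2
  obtain ⟨c1, c2, hc1, hc2, hc1x, hc2x, hc12, hexC⟩ := three_enum_one (hord.1 C hC.1) hC.2
  have cross : ∀ (p : P) (L L' : Set P), L ∈ N.Lines → L' ∈ N.Lines → L ≠ L' →
      x ∈ L → x ∈ L' → p ∈ L → p ∈ L' → p ≠ x → False := by
    intro p L L' hL hL' hne hxL hxL' hpL hpL' hpx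
    exact hne (line_unique hL hL' (Ne.symm hpx) hxL hpL hxL' hpL')
  have nab1 : a1 ≠ b1 := fun h => cross a1 A B hA.1 hB.1 hAB hA.2 hB.2 ha1 (h ▸ hb1) ha1x
  have nab2 : a1 ≠ b2 := fun h => cross a1 A B hA.1 hB.1 hAB hA.2 hB.2 ha1 (h ▸ hb2) ha1x
  have nab3 : a2 ≠ b1 := fun h => cross a2 A B hA.1 hB.1 hAB hA.2 hB.2 ha2 (h ▸ hb1) ha2x
  have nab4 : a2 ≠ b2 := fun h => cross a2 A B hA.1 hB.1 hAB hA.2 hB.2 ha2 (h ▸ hb2) ha2x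
  have nac1 : a1 ≠ c1 := fun h => cross a1 A C hA.1 hC.1 hAC hA.2 hC.2 ha1 (h ▸ hc1) ha1x
  have nac2 : a1 ≠ c2 := fun h => cross a1 A C hA.1 hC.1 hAC hA.2 hC.2 ha1 (h ▸ hc2) ha1x
  have nac3 : a2 ≠ c1 := fun h => cross a2 A C hA.1 hC.1 hAC hA.2 hC.2 ha2 (h ▸ hc1) ha2x
  have nac4 : a2 ≠ c2 := fun h => cross a2 A C hA.1 hC.1 hAC hA.2 hC.2 ha2 (h ▸ hc2) ha2x
  have nbc1 : b1 ≠ c1 := fun h => cross b1 B C hB.1 hC.1 hBC hB.2 hC.2 hb1 (h ▸ hc1) hb1x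
  have nbc2 : b1 ≠ c2 := fun h => cross b1 B C hB.1 hC.1 hBC hB.2 hC.2 hb1 (h ▸ hc2) hb1x
  have nbc3 : b2 ≠ c1 := fun h => cross b2 B C hB.1 hC.1 hBC hB.2 hC.2 hb2 (h ▸ hc1) hb2x
  have nbc4 : b2 ≠ c2 := fun h => cross b2 B C hB.1 hC.1 hBC hB.2 hC.2 hb2 (h ▸ hc2) hb2x
  have hset : {c | (collGraph N.Lines).dist x c = 1} = {a1, a2, b1, b2, c1, c2} := by
    ext p
    simp only [Set.mem_setOf_eq, Set.mem_insert_iff, Set.mem_singleton_iff]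
    constructor
    · intro hp
      obtain ⟨hne, L, hL, hxL, hpL⟩ := dist_eq_one_iff_adj.mp hp
      rcases hexL L ⟨hL, hxL⟩ with rfl | rfl | rfl
      · rcases hexA p hpL with rfl | rfl | rfl
        · exact absurd rfl hne
        · tauto
        · tauto
      · rcases hexB p hpL with rfl | rfl | rfl
        · exact absurd rfl hne
        · tauto
        · tauto
      · rcases hexC p hpL with rfl | rfl | rfl
        · exact absurd rfl hne
        · tauto
        · tauto
    · intro hp
      rcases hp with rfl | rfl | rfl | rfl | rfl | rfl
      · exact dist_eq_one_iff_adj.mpr (adj_line hA.1 hA.2 ha1 (Ne.symm ha1x))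
      · exact dist_eq_one_iff_adj.mpr (adj_line hA.1 hA.2 ha2 (Ne.symm ha2x))
      · exact dist_eq_one_iff_adj.mpr (adj_line hB.1 hB.2 hb1 (Ne.symm hb1x))
      · exact dist_eq_one_iff_adj.mpr (adj_line hB.1 hB.2 hb2 (Ne.symm hb2x))
      · exact dist_eq_one_iff_adj.mpr (adj_line hC.1 hC.2 hc1 (Ne.symm hc1x))
      · exact dist_eq_one_iff_adj.mpr (adj_line hC.1 hC.2 hc2 (Ne.symm hc2x))
  rw [hset]
  rw [Set.ncard_insert_of_notMem (by simp [ha12, nab1, nab2, nac1, nac2]),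
      Set.ncard_insert_of_notMem (by simp [nab3, nab4, nac3, nac4]),
      Set.ncard_insert_of_notMem (by simp [hb12, nbc1, nbc2]),
      Set.ncard_insert_of_notMem (by simp [nbc3, nbc4]),
      Set.ncard_pair hc12]

lemma adj_sphere1_count (hord : N.hasOrder 2 2) {x z : P}
    (hz : (collGraph N.Lines).dist x z = 1) :
    {p | (collGraph N.Lines).dist x p = 2 ∧ (collGraph N.Lines).Adj z p}.ncard = 4 := by
  have hadj := dist_eq_one_iff_adj.mp hz
  obtain ⟨L0, hL0, hxL0, hzL0⟩ := hadj.2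
  obtain ⟨t0, ht0, ht0x, ht0z, hexL0⟩ := third_point hord hL0 hxL0 hzL0 hadj.ne
  obtain ⟨M, M', hM, hM', hML0, hM'L0, hMM', hexLz⟩ :=
    three_enum_one (hord.2 z) (⟨hL0, hzL0⟩ : L0 ∈ {L | L ∈ N.Lines ∧ z ∈ L})
  have hxM : x ∉ M := fun hx =>
    hML0 (line_unique hM.1 hL0 hadj.ne hx hM.2 hxL0 hzL0)
  have hxM' : x ∉ M' := fun hx =>
    hM'L0 (line_unique hM'.1 hL0 hadj.ne hx hM'.2 hxL0 hzL0)
  obtain ⟨p1, q1, hp1, hq1, hp1z, hq1z, hp1q1, hexM⟩ := three_enum_one (hord.1 M hM.1) hM.2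
  obtain ⟨p2, q2, hp2, hq2, hp2z, hq2z, hp2q2, hexM'⟩ := three_enum_one (hord.1 M' hM'.1) hM'.2
  have dp1 : (collGraph N.Lines).dist x p1 = 2 := dist_on_far_line hM.1 hz hM.2 hxM hp1 hp1z
  have dq1 : (collGraph N.Lines).dist x q1 = 2 := dist_on_far_line hM.1 hz hM.2 hxM hq1 hq1z
  have dp2 : (collGraph N.Lines).dist x p2 = 2 := dist_on_far_line hM'.1 hz hM'.2 hxM' hp2 hp2z
  have dq2 : (collGraph N.Lines).dist x q2 = 2 := dist_on_far_line hM'.1 hz hM'.2 hxM' hq2 hq2z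
  have cross : ∀ p : P, p ∈ M → p ∈ M' → p ≠ z → False := by
    intro p hp hp' hpz
    exact hMM' (line_unique hM.1 hM'.1 (Ne.symm hpz) hM.2 hp hM'.2 hp')
  have n1 : p1 ≠ p2 := fun h => cross p1 hp1 (h ▸ hp2) hp1z
  have n2 : p1 ≠ q2 := fun h => cross p1 hp1 (h ▸ hq2) hp1z
  have n3 : q1 ≠ p2 := fun h => cross q1 hq1 (h ▸ hp2) hq1z
  have n4 : q1 ≠ q2 := fun h => cross q1 hq1 (h ▸ hq2) hq1z
  have hset : {p | (collGraph N.Lines).dist x p = 2 ∧ (collGraph N.Lines).Adj z p}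
      = {p1, q1, p2, q2} := by
    ext p
    simp only [Set.mem_setOf_eq, Set.mem_insert_iff, Set.mem_singleton_iff]
    constructor
    · rintro ⟨hd, hne, L', hL', hzL', hpL'⟩
      rcases hexLz L' ⟨hL', hzL'⟩ with rfl | rfl | rfl
      · rcases hexL0 p hpL' with rfl | rfl | rfl
        · rw [SimpleGraph.dist_self] at hd; omega
        · exact absurd rfl hne
        · have : (collGraph N.Lines).dist x p = 1 :=
            dist_eq_one_iff_adj.mpr (adj_line hL' hxL0 hpL' (Ne.symm ht0x))
          omega
      · rcases hexM p hpL' with rfl | rfl | rfl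
        · exact absurd rfl hne
        · tauto
        · tauto
      · rcases hexM' p hpL' with rfl | rfl | rfl
        · exact absurd rfl hne
        · tauto
        · tauto
    · intro hp
      rcases hp with rfl | rfl | rfl | rfl
      · exact ⟨dp1, adj_line hM.1 hM.2 hp1 (Ne.symm hp1z)⟩
      · exact ⟨dq1, adj_line hM.1 hM.2 hq1 (Ne.symm hq1z)⟩
      · exact ⟨dp2, adj_line hM'.1 hM'.2 hp2 (Ne.symm hp2z)⟩
      · exact ⟨dq2, adj_line hM'.1 hM'.2 hq2 (Ne.symm hq2z)⟩
  rw [hset,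
      Set.ncard_insert_of_notMem (by simp [hp1q1, n1, n2]),
      Set.ncard_insert_of_notMem (by simp [n3, n4]),
      Set.ncard_pair hp2q2]

lemma sphere3_count (hord : N.hasOrder 2 2) {x q : P}
    (hq : (collGraph N.Lines).dist x q = 3) :
    {p | (collGraph N.Lines).dist x p = 2 ∧ (collGraph N.Lines).Adj q p}.ncard = 3 := by
  obtain ⟨L1, L2, L3, hL1, hL2, hL3, h12, h13, h23, hexL⟩ := three_enum (hord.2 q)
  have key : ∀ L : Set P, L ∈ N.Lines → q ∈ L →
      ∃ m ∈ L, m ≠ q ∧ (collGraph N.Lines).dist x m = 2 ∧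
        ∀ p ∈ L, (collGraph N.Lines).dist x p = 2 → p = m := by
    intro L hL hqL
    obtain ⟨m, hm, hprof⟩ := profile hL x
    have hmq : m ≠ q := by
      rintro rfl
      obtain ⟨a, b, ha, hb, ham, hbm, hab, hex⟩ := three_enum_one (hord.1 L hL) hm
      have := hprof a ha ham
      have := N.diam_le x a
      omega
    have hdm : (collGraph N.Lines).dist x m = 2 := by
      have := hprof q hqL (Ne.symm hmq)
      omega
    refine ⟨m, hm, hmq, hdm, fun p hp hp2 => ?_⟩
    by_contra hpm
    have := hprof p hp hpm
    omega
  obtain ⟨m1, hm1, hm1q, hd1, huniq1⟩ := key L1 hL1.1 hL1.2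
  obtain ⟨m2, hm2, hm2q, hd2, huniq2⟩ := key L2 hL2.1 hL2.2
  obtain ⟨m3, hm3, hm3q, hd3, huniq3⟩ := key L3 hL3.1 hL3.2
  have cross : ∀ (p : P) (L L' : Set P), L ∈ N.Lines → L' ∈ N.Lines → L ≠ L' →
      q ∈ L → q ∈ L' → p ∈ L → p ∈ L' → p ≠ q → False := by
    intro p L L' hL hL' hne hqL hqL' hpL hpL' hpq
    exact hne (line_unique hL hL' (Ne.symm hpq) hqL hpL hqL' hpL')
  have n1 : m1 ≠ m2 := fun h => cross m1 L1 L2 hL1.1 hL2.1 h12 hL1.2 hL2.2 hm1 (h ▸ hm2) hm1q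
  have n2 : m1 ≠ m3 := fun h => cross m1 L1 L3 hL1.1 hL3.1 h13 hL1.2 hL3.2 hm1 (h ▸ hm3) hm1q
  have n3 : m2 ≠ m3 := fun h => cross m2 L2 L3 hL2.1 hL3.1 h23 hL2.2 hL3.2 hm2 (h ▸ hm3) hm2q
  have hset : {p | (collGraph N.Lines).dist x p = 2 ∧ (collGraph N.Lines).Adj q p}
      = {m1, m2, m3} := by
    ext p
    simp only [Set.mem_setOf_eq, Set.mem_insert_iff, Set.mem_singleton_iff]
    constructor
    · rintro ⟨hd, hne, L', hL', hqL', hpL'⟩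
      rcases hexL L' ⟨hL', hqL'⟩ with rfl | rfl | rfl
      · exact Or.inl (huniq1 p hpL' hd)
      · exact Or.inr (Or.inl (huniq2 p hpL' hd))
      · exact Or.inr (Or.inr (huniq3 p hpL' hd))
    · intro hp
      rcases hp with rfl | rfl | rfl
      · exact ⟨hd1, adj_line hL1.1 hL1.2 hm1 (Ne.symm hm1q)⟩
      · exact ⟨hd2, adj_line hL2.1 hL2.2 hm2 (Ne.symm hm2q)⟩
      · exact ⟨hd3, adj_line hL3.1 hL3.2 hm3 (Ne.symm hm3q)⟩
  rw [hset, Set.ncard_insert_of_notMem (by simp [n1, n2]), Set.ncard_pair n3]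

end Counting
end NHX
namespace NHX
open SimpleGraph Set

section Counting2
variable {P : Type*} {N : NearPolygon P 3}

/-- For a point `p` at distance 2 from `x`:  (number of neighbors of `p` at distance 3)
    `+ 2 *` (number of neighbors at distance 1) `= 6`. -/
lemma sphere2_rel (hord : N.hasOrder 2 2) {x p : P}
    (hp : (collGraph N.Lines).dist x p = 2) :
    {q | (collGraph N.Lines).dist x q = 3 ∧ (collGraph N.Lines).Adj q p}.ncard
      + 2 * {c | (collGraph N.Lines).dist x c = 1 ∧ (collGraph N.Lines).Adj c p}.ncard = 6 := by
  set A3 := {q | (collGraph N.Lines).dist x q = 3 ∧ (collGraph N.Lines).Adj q p} with hA3def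
  set A1 := {c | (collGraph N.Lines).dist x c = 1 ∧ (collGraph N.Lines).Adj c p} with hA1def
  obtain ⟨L1, L2, L3, hL1, hL2, hL3, h12, h13, h23, hexL⟩ := three_enum (hord.2 p)
  have key : ∀ L : Set P, L ∈ N.Lines → p ∈ L →
      (A3 ∩ L).ncard + 2 * (A1 ∩ L).ncard = 2 := by
    intro L hL hpL
    have hxL : x ∉ L := by
      intro hxmem
      have : (collGraph N.Lines).dist x p = 1 := dist_eq_one_iff_adj.mpr
        (adj_line hL hxmem hpL (fun h => by rw [← h, SimpleGraph.dist_self] at hp; omega))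
      omega
    obtain ⟨a, b, ha, hb, hap, hbp, hab, hex⟩ := three_enum_one (hord.1 L hL) hpL
    obtain ⟨m, hm, hprof⟩ := profile hL x
    by_cases hmp : m = p
    · subst hmp
      have hda : (collGraph N.Lines).dist x a = 3 := by have := hprof a ha hap; omega
      have hdb : (collGraph N.Lines).dist x b = 3 := by have := hprof b hb hbp; omega
      have e3 : A3 ∩ L = {a, b} := by
        ext r
        simp only [hA3def, Set.mem_inter_iff, Set.mem_setOf_eq, Set.mem_insert_iff,
          Set.mem_singleton_iff]
        constructor
        · rintro ⟨⟨hd, -⟩, hrL⟩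
          rcases hex r hrL with rfl | rfl | rfl
          · omega
          · exact Or.inl rfl
          · exact Or.inr rfl
        · intro h
          rcases h with rfl | rfl
          · exact ⟨⟨hda, adj_line hL ha hpL hap⟩, ha⟩
          · exact ⟨⟨hdb, adj_line hL hb hpL hbp⟩, hb⟩
      have e1 : A1 ∩ L = ∅ := by
        ext r
        simp only [hA1def, Set.mem_inter_iff, Set.mem_setOf_eq, Set.mem_empty_iff_false,
          iff_false, not_and]
        rintro ⟨hd, -⟩ hrL
        rcases hex r hrL with rfl | rfl | rfl <;> omega
      rw [e3, e1, Set.ncard_pair hab, Set.ncard_empty]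
    · have hdm : (collGraph N.Lines).dist x m = 1 := by
        have := hprof p hpL (fun h => hmp h.symm)
        omega
      have hsub : ∀ c d : P, c ∈ L → d ∈ L → c ≠ d → c ≠ p → d ≠ p →
          (∀ r ∈ L, r = p ∨ r = c ∨ r = d) → (collGraph N.Lines).dist x c = 1 →
          (A3 ∩ L).ncard + 2 * (A1 ∩ L).ncard = 2 := by
        intro c d hc hd hcd hcp hdp hex' hdc
        have hdd : (collGraph N.Lines).dist x d = 2 := by
          have hmc : m = c := by
            rcases hex' m hm with h | h | h
            · exact absurd h hmp
            · exact h
            · exfalso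
              have hcm : c ≠ m := fun hh => hcd (hh.trans h)
              have hthis := hprof c hc hcm
              have h0 : (collGraph N.Lines).dist x m = 0 := by omega
              exact hxL ((dist_eq_zero_iff N).mp h0 ▸ hm)
          subst hmc
          have := hprof d hd (fun h => hcd h.symm)
          omega
        have e3 : A3 ∩ L = ∅ := by
          ext r
          simp only [hA3def, Set.mem_inter_iff, Set.mem_setOf_eq, Set.mem_empty_iff_false,
            iff_false, not_and]
          rintro ⟨hdist, -⟩ hrL
          rcases hex' r hrL with rfl | rfl | rfl <;> omega
        have e1 : A1 ∩ L = {c} := by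
          ext r
          simp only [hA1def, Set.mem_inter_iff, Set.mem_setOf_eq, Set.mem_singleton_iff]
          constructor
          · rintro ⟨⟨hdist, -⟩, hrL⟩
            rcases hex' r hrL with rfl | rfl | rfl
            · omega
            · rfl
            · omega
          · rintro rfl
            exact ⟨⟨hdc, adj_line hL hc hpL hcp⟩, hc⟩
        rw [e3, e1, Set.ncard_empty, Set.ncard_singleton]
      rcases hex m hm with h | h | h
      · exact absurd h hmp
      · exact hsub a b ha hb hab hap hbp hex (h ▸ hdm)
      · exact hsub b a hb ha hab.symm hbp hap
          (fun r hr => by rcases hex r hr with h' | h' | h' <;> tauto) (h ▸ hdm)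
  have finL : ∀ L : Set P, L ∈ N.Lines → L.Finite := fun L hL =>
    Set.finite_of_ncard_ne_zero (by rw [hord.1 L hL]; omega)
  have hA3cover : A3 = (A3 ∩ L1) ∪ ((A3 ∩ L2) ∪ (A3 ∩ L3)) := by
    ext r
    simp only [Set.mem_union, Set.mem_inter_iff]
    constructor
    · intro hr
      obtain ⟨hd, hne, L', hL', hrL', hpL'⟩ := hr
      have hrA : r ∈ A3 := ⟨hd, hne, L', hL', hrL', hpL'⟩
      rcases hexL L' ⟨hL', hpL'⟩ with rfl | rfl | rfl
      · exact Or.inl ⟨hrA, hrL'⟩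
      · exact Or.inr (Or.inl ⟨hrA, hrL'⟩)
      · exact Or.inr (Or.inr ⟨hrA, hrL'⟩)
    · tauto
  have hA1cover : A1 = (A1 ∩ L1) ∪ ((A1 ∩ L2) ∪ (A1 ∩ L3)) := by
    ext r
    simp only [Set.mem_union, Set.mem_inter_iff]
    constructor
    · intro hr
      obtain ⟨hd, hne, L', hL', hrL', hpL'⟩ := hr
      have hrA : r ∈ A1 := ⟨hd, hne, L', hL', hrL', hpL'⟩
      rcases hexL L' ⟨hL', hpL'⟩ with rfl | rfl | rfl
      · exact Or.inl ⟨hrA, hrL'⟩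
      · exact Or.inr (Or.inl ⟨hrA, hrL'⟩)
      · exact Or.inr (Or.inr ⟨hrA, hrL'⟩)
    · tauto
  have hdisj : ∀ (S : Set P) (L L' : Set P), L ∈ N.Lines → L' ∈ N.Lines → L ≠ L' →
      p ∈ L → p ∈ L' → (∀ r ∈ S, (collGraph N.Lines).Adj r p) →
      Disjoint (S ∩ L) (S ∩ L') := by
    intro S L L' hL hL' hne hpL hpL' hSadj
    rw [Set.disjoint_left]
    rintro r ⟨hrS, hrL⟩ ⟨-, hrL'⟩
    exact hne (line_unique hL hL' ((hSadj r hrS).ne) hrL hpL hrL' hpL')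
  have hadjA3 : ∀ r ∈ A3, (collGraph N.Lines).Adj r p := fun r hr => hr.2
  have hadjA1 : ∀ r ∈ A1, (collGraph N.Lines).Adj r p := fun r hr => hr.2
  have hfin : ∀ (S : Set P) (L : Set P), L ∈ N.Lines → (S ∩ L).Finite :=
    fun S L hL => (finL L hL).subset Set.inter_subset_right
  have hcard3 : A3.ncard = (A3 ∩ L1).ncard + ((A3 ∩ L2).ncard + (A3 ∩ L3).ncard) := by
    conv_lhs => rw [hA3cover]
    rw [ Set.ncard_union_eq ?d1 (hfin _ _ hL1.1) (((hfin _ _ hL2.1).union (hfin _ _ hL3.1))),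
        Set.ncard_union_eq (hdisj _ _ _ hL2.1 hL3.1 h23 hL2.2 hL3.2 hadjA3)
          (hfin _ _ hL2.1) (hfin _ _ hL3.1)]
    case d1 =>
      rw [Set.disjoint_union_right]
      exact ⟨hdisj _ _ _ hL1.1 hL2.1 h12 hL1.2 hL2.2 hadjA3,
             hdisj _ _ _ hL1.1 hL3.1 h13 hL1.2 hL3.2 hadjA3⟩
  have hcard1 : A1.ncard = (A1 ∩ L1).ncard + ((A1 ∩ L2).ncard + (A1 ∩ L3).ncard) := by
    conv_lhs => rw [hA1cover]
    rw [ Set.ncard_union_eq ?d1 (hfin _ _ hL1.1) (((hfin _ _ hL2.1).union (hfin _ _ hL3.1))),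
        Set.ncard_union_eq (hdisj _ _ _ hL2.1 hL3.1 h23 hL2.2 hL3.2 hadjA1)
          (hfin _ _ hL2.1) (hfin _ _ hL3.1)]
    case d1 =>
      rw [Set.disjoint_union_right]
      exact ⟨hdisj _ _ _ hL1.1 hL2.1 h12 hL1.2 hL2.2 hadjA1,
             hdisj _ _ _ hL1.1 hL3.1 h13 hL1.2 hL3.2 hadjA1⟩
  have k1 := key L1 hL1.1 hL1.2
  have k2 := key L2 hL2.1 hL2.2
  have k3 := key L3 hL3.1 hL3.2
  omega

end Counting2
end NHX
namespace NHX
open SimpleGraph Set Finset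

section Global
variable {P : Type*} {N : NearPolygon P 3}

lemma count_n2 (hord : N.hasOrder 2 2) (hfin : Finite P) (x : P) :
    3 * {p | (collGraph N.Lines).dist x p = 2}.ncard = Nat.card P + 9 ∧
    ({p | (collGraph N.Lines).dist x p = 2}.ncard = 24 →
      ∀ y, (collGraph N.Lines).dist x y = 2 →
        {c | (collGraph N.Lines).dist x c = 1 ∧ (collGraph N.Lines).Adj c y}.ncard = 1) ∧
    ({p | (collGraph N.Lines).dist x p = 2}.ncard = 12 →
      (∀ y, (collGraph N.Lines).dist x y = 2 →
        {c | (collGraph N.Lines).dist x c = 1 ∧ (collGraph N.Lines).Adj c y}.ncard ≠ 3) →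
      ∀ y, (collGraph N.Lines).dist x y = 2 →
        {c | (collGraph N.Lines).dist x c = 1 ∧ (collGraph N.Lines).Adj c y}.ncard = 2) := by
  classical
  letI := Fintype.ofFinite P
  have bridge : ∀ (q : P → Prop) [DecidablePred q],
      {p | q p}.ncard = (Finset.univ.filter q).card := by
    intro q hq
    have hs : {p | q p} = ↑(Finset.univ.filter q) := by ext p; simp
    rw [hs, Set.ncard_coe_finset]
  set Γ1f := Finset.univ.filter (fun p => (collGraph N.Lines).dist x p = 1) with hΓ1
  set Γ2f := Finset.univ.filter (fun p => (collGraph N.Lines).dist x p = 2) with hΓ2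
  set Γ3f := Finset.univ.filter (fun p => (collGraph N.Lines).dist x p = 3) with hΓ3
  have hpart : Fintype.card P =
      (Finset.univ.filter (fun p => (collGraph N.Lines).dist x p = 0)).card
        + (Γ1f.card + (Γ2f.card + Γ3f.card)) := by
    have h := Finset.card_eq_sum_card_fiberwise
      (f := fun p => (collGraph N.Lines).dist x p) (s := Finset.univ) (t := Finset.range 4)
      (fun p _ => by simp only [Finset.coe_range, Set.mem_Iio, Finset.mem_range]; have := N.diam_le x p; omega)
    rw [Finset.card_univ] at h
    rw [h, Finset.sum_range_succ, Finset.sum_range_succ, Finset.sum_range_succ,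
      Finset.sum_range_one]
    ring
  have h0 : (Finset.univ.filter (fun p => (collGraph N.Lines).dist x p = 0)).card = 1 := by
    rw [Finset.card_eq_one]
    refine ⟨x, ?_⟩
    ext p
    simp only [Finset.mem_filter, Finset.mem_univ, true_and, Finset.mem_singleton]
    rw [N.connected.dist_eq_zero_iff]
    exact ⟨fun h => h.symm, fun h => h.symm⟩
  have h1 : Γ1f.card = 6 := by
    rw [hΓ1, ← bridge, sphere1_ncard hord]
  have hmem1 : ∀ z ∈ Γ1f, (collGraph N.Lines).dist x z = 1 := by
    intro z hz; rw [hΓ1] at hz; exact (Finset.mem_filter.mp hz).2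
  have hmem2 : ∀ p ∈ Γ2f, (collGraph N.Lines).dist x p = 2 := by
    intro z hz; rw [hΓ2] at hz; exact (Finset.mem_filter.mp hz).2
  have hmem3 : ∀ p ∈ Γ3f, (collGraph N.Lines).dist x p = 3 := by
    intro z hz; rw [hΓ3] at hz; exact (Finset.mem_filter.mp hz).2
  -- double count edges between Γ1 and Γ2
  have hcomm1 : ∑ z ∈ Γ1f, (Γ2f.filter (fun p => (collGraph N.Lines).Adj z p)).card
      = ∑ p ∈ Γ2f, (Γ1f.filter (fun c => (collGraph N.Lines).Adj c p)).card := by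
    simp only [Finset.card_filter]
    exact Finset.sum_comm
  have hsum24 : ∑ p ∈ Γ2f, (Γ1f.filter (fun c => (collGraph N.Lines).Adj c p)).card = 24 := by
    rw [← hcomm1]
    have e4 : ∀ z ∈ Γ1f, (Γ2f.filter (fun p => (collGraph N.Lines).Adj z p)).card = 4 := by
      intro z hz
      rw [hΓ2, Finset.filter_filter, ← bridge]
      exact adj_sphere1_count hord (hmem1 z hz)
    rw [Finset.sum_congr rfl e4, Finset.sum_const, h1]
    simp
  -- double count edges between Γ2 and Γ3
  have hcomm2 : ∑ q ∈ Γ3f, (Γ2f.filter (fun p => (collGraph N.Lines).Adj q p)).card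
      = ∑ p ∈ Γ2f, (Γ3f.filter (fun q => (collGraph N.Lines).Adj q p)).card := by
    simp only [Finset.card_filter]
    exact Finset.sum_comm
  have hsum3 : ∑ p ∈ Γ2f, (Γ3f.filter (fun q => (collGraph N.Lines).Adj q p)).card
      = 3 * Γ3f.card := by
    rw [← hcomm2]
    have e3 : ∀ q ∈ Γ3f, (Γ2f.filter (fun p => (collGraph N.Lines).Adj q p)).card = 3 := by
      intro q hq
      rw [hΓ2, Finset.filter_filter, ← bridge]
      exact sphere3_count hord (hmem3 q hq)
    rw [Finset.sum_congr rfl e3, Finset.sum_const, smul_eq_mul, Nat.mul_comm]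
  have hrel : ∀ p ∈ Γ2f, (Γ3f.filter (fun q => (collGraph N.Lines).Adj q p)).card
      + 2 * (Γ1f.filter (fun c => (collGraph N.Lines).Adj c p)).card = 6 := by
    intro p hp
    rw [hΓ3, hΓ1, Finset.filter_filter, Finset.filter_filter, ← bridge, ← bridge]
    exact sphere2_rel hord (hmem2 p hp)
  have hrelsum : 3 * Γ3f.card + 2 * 24 = 6 * Γ2f.card := by
    have h := Finset.sum_congr rfl hrel
    rw [Finset.sum_add_distrib, hsum3, ← Finset.mul_sum, hsum24, Finset.sum_const,
      smul_eq_mul] at h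
    omega
  have hge1 : ∀ p ∈ Γ2f, 1 ≤ (Γ1f.filter (fun c => (collGraph N.Lines).Adj c p)).card := by
    intro p hp
    obtain ⟨c, hc1, hc2⟩ := midpoint_of_dist_two N (hmem2 p hp)
    refine Finset.card_pos.mpr ⟨c, ?_⟩
    rw [hΓ1]
    simp only [Finset.mem_filter, Finset.mem_univ, true_and]
    exact ⟨dist_eq_one_iff_adj.mpr hc1, hc2⟩
  have hle3 : ∀ p ∈ Γ2f, (Γ1f.filter (fun c => (collGraph N.Lines).Adj c p)).card ≤ 3 := by
    intro p hp
    have := hrel p hp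
    omega
  have hbridge2 : {p | (collGraph N.Lines).dist x p = 2}.ncard = Γ2f.card := bridge _
  have hmu : ∀ y, (collGraph N.Lines).dist x y = 2 →
      {c | (collGraph N.Lines).dist x c = 1 ∧ (collGraph N.Lines).Adj c y}.ncard
        = (Γ1f.filter (fun c => (collGraph N.Lines).Adj c y)).card := by
    intro y hy
    rw [hΓ1, Finset.filter_filter, ← bridge]
  refine ⟨?_, ?_, ?_⟩
  · rw [hbridge2, Nat.card_eq_fintype_card]
    omega
  · intro h24 y hy
    rw [hbridge2] at h24
    have hymem : y ∈ Γ2f := by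
      rw [hΓ2]; simp only [Finset.mem_filter, Finset.mem_univ, true_and]; exact hy
    rw [hmu y hy]
    by_contra hne
    have hlt : ∑ p ∈ Γ2f, (1 : ℕ) < ∑ p ∈ Γ2f,
        (Γ1f.filter (fun c => (collGraph N.Lines).Adj c p)).card := by
      refine Finset.sum_lt_sum hge1 ⟨y, hymem, ?_⟩
      have := hge1 y hymem
      omega
    rw [hsum24, Finset.sum_const, h24, smul_eq_mul] at hlt
    omega
  · intro h12 hne3 y hy
    rw [hbridge2] at h12
    have hymem : y ∈ Γ2f := by
      rw [hΓ2]; simp only [Finset.mem_filter, Finset.mem_univ, true_and]; exact hy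
    rw [hmu y hy]
    have hle2 : ∀ p ∈ Γ2f, (Γ1f.filter (fun c => (collGraph N.Lines).Adj c p)).card ≤ 2 := by
      intro p hp
      have hne := hne3 p (hmem2 p hp)
      rw [hmu p (hmem2 p hp)] at hne
      have := hle3 p hp
      omega
    by_contra hne
    have hlt : ∑ p ∈ Γ2f,
        (Γ1f.filter (fun c => (collGraph N.Lines).Adj c p)).card < ∑ p ∈ Γ2f, (2 : ℕ) := by
      refine Finset.sum_lt_sum hle2 ⟨y, hymem, ?_⟩
      have := hle2 y hymem
      omega
    rw [hsum24, Finset.sum_const, h12, smul_eq_mul] at hlt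
    omega

end Global
end NHX
namespace NHX
open SimpleGraph Set

section NoMu3
variable {P : Type*} {N : NearPolygon P 3}

set_option maxHeartbeats 2000000 in
lemma no_mu3 (hord : N.hasOrder 2 2) (hfin : Finite P) {x y : P}
    (hxy : (collGraph N.Lines).dist x y = 2)
    (h12 : {p | (collGraph N.Lines).dist x p = 2}.ncard = 12)
    (hmu : {c | (collGraph N.Lines).dist x c = 1 ∧ (collGraph N.Lines).Adj c y}.ncard = 3) :
    False := by
  haveI := hfin
  have hxyne : x ≠ y := by
    intro h
    rw [h, SimpleGraph.dist_self] at hxy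
    omega
  obtain ⟨z1, z2, z3, hzz12, hzz13, hzz23, hset3⟩ := Set.ncard_eq_three.mp hmu
  have hzmem1 : (collGraph N.Lines).dist x z1 = 1 ∧ (collGraph N.Lines).Adj z1 y := by
    have h : z1 ∈ {c | (collGraph N.Lines).dist x c = 1 ∧ (collGraph N.Lines).Adj c y} := by
      rw [hset3]; simp
    exact h
  obtain ⟨hd1, ha1⟩ := hzmem1
  have hx1 : (collGraph N.Lines).Adj x z1 := SimpleGraph.dist_eq_one_iff_adj.mp hd1
  obtain ⟨hne1, L1, hL1, hxL1, hzL1⟩ := id hx1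
  obtain ⟨u1, huL1, hu1x, hu1z, eL1⟩ := third_point hord hL1 hxL1 hzL1 hne1
  obtain ⟨hzy1, M1, hM1, hzM1, hyM1⟩ := id ha1
  obtain ⟨w1, hwM1, hw1z, hw1y, eM1⟩ := third_point hord hM1 hzM1 hyM1 hzy1
  have hdu1 : (collGraph N.Lines).dist x u1 = 1 :=
    SimpleGraph.dist_eq_one_iff_adj.mpr (adj_line hL1 hxL1 huL1 (Ne.symm hu1x))
  have hdw1 : (collGraph N.Lines).dist x w1 = 2 :=
    eval_12 hM1 hzM1 hyM1 hwM1 eM1 hzy1 (Ne.symm hw1z) (Ne.symm hw1y) hd1 hxy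
  have hzmem2 : (collGraph N.Lines).dist x z2 = 1 ∧ (collGraph N.Lines).Adj z2 y := by
    have h : z2 ∈ {c | (collGraph N.Lines).dist x c = 1 ∧ (collGraph N.Lines).Adj c y} := by
      rw [hset3]; simp
    exact h
  obtain ⟨hd2, ha2⟩ := hzmem2
  have hx2 : (collGraph N.Lines).Adj x z2 := SimpleGraph.dist_eq_one_iff_adj.mp hd2
  obtain ⟨hne2, L2, hL2, hxL2, hzL2⟩ := id hx2
  obtain ⟨u2, huL2, hu2x, hu2z, eL2⟩ := third_point hord hL2 hxL2 hzL2 hne2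
  obtain ⟨hzy2, M2, hM2, hzM2, hyM2⟩ := id ha2
  obtain ⟨w2, hwM2, hw2z, hw2y, eM2⟩ := third_point hord hM2 hzM2 hyM2 hzy2
  have hdu2 : (collGraph N.Lines).dist x u2 = 1 :=
    SimpleGraph.dist_eq_one_iff_adj.mpr (adj_line hL2 hxL2 huL2 (Ne.symm hu2x))
  have hdw2 : (collGraph N.Lines).dist x w2 = 2 :=
    eval_12 hM2 hzM2 hyM2 hwM2 eM2 hzy2 (Ne.symm hw2z) (Ne.symm hw2y) hd2 hxy
  have hzmem3 : (collGraph N.Lines).dist x z3 = 1 ∧ (collGraph N.Lines).Adj z3 y := by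
    have h : z3 ∈ {c | (collGraph N.Lines).dist x c = 1 ∧ (collGraph N.Lines).Adj c y} := by
      rw [hset3]; simp
    exact h
  obtain ⟨hd3, ha3⟩ := hzmem3
  have hx3 : (collGraph N.Lines).Adj x z3 := SimpleGraph.dist_eq_one_iff_adj.mp hd3
  obtain ⟨hne3, L3, hL3, hxL3, hzL3⟩ := id hx3
  obtain ⟨u3, huL3, hu3x, hu3z, eL3⟩ := third_point hord hL3 hxL3 hzL3 hne3
  obtain ⟨hzy3, M3, hM3, hzM3, hyM3⟩ := id ha3
  obtain ⟨w3, hwM3, hw3z, hw3y, eM3⟩ := third_point hord hM3 hzM3 hyM3 hzy3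
  have hdu3 : (collGraph N.Lines).dist x u3 = 1 :=
    SimpleGraph.dist_eq_one_iff_adj.mpr (adj_line hL3 hxL3 huL3 (Ne.symm hu3x))
  have hdw3 : (collGraph N.Lines).dist x w3 = 2 :=
    eval_12 hM3 hzM3 hyM3 hwM3 eM3 hzy3 (Ne.symm hw3z) (Ne.symm hw3y) hd3 hxy
  have hznL12 : z2 ∉ L1 :=
    not_mem_line_cn hxyne hL1 hxL1 hzL1 huL1 eL1 hne1 (Ne.symm hu1x)
      (Ne.symm hu1z) ha1 ha2 hx2 (Ne.symm hzz12)
  have hznM12 : z2 ∉ M1 :=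
    not_mem_line_cn (Ne.symm hxyne) hM1 hyM1 hzM1 hwM1
      (fun p hp => by rcases eM1 p hp with h | h | h <;> tauto)
      (Ne.symm hzy1) (Ne.symm hw1y) (Ne.symm hw1z) hx1.symm hx2.symm ha2.symm (Ne.symm hzz12)
  have hznL13 : z3 ∉ L1 :=
    not_mem_line_cn hxyne hL1 hxL1 hzL1 huL1 eL1 hne1 (Ne.symm hu1x)
      (Ne.symm hu1z) ha1 ha3 hx3 (Ne.symm hzz13)
  have hznM13 : z3 ∉ M1 :=
    not_mem_line_cn (Ne.symm hxyne) hM1 hyM1 hzM1 hwM1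
      (fun p hp => by rcases eM1 p hp with h | h | h <;> tauto)
      (Ne.symm hzy1) (Ne.symm hw1y) (Ne.symm hw1z) hx1.symm hx3.symm ha3.symm (Ne.symm hzz13)
  have hznL21 : z1 ∉ L2 :=
    not_mem_line_cn hxyne hL2 hxL2 hzL2 huL2 eL2 hne2 (Ne.symm hu2x)
      (Ne.symm hu2z) ha2 ha1 hx1 hzz12
  have hznM21 : z1 ∉ M2 :=
    not_mem_line_cn (Ne.symm hxyne) hM2 hyM2 hzM2 hwM2
      (fun p hp => by rcases eM2 p hp with h | h | h <;> tauto)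
      (Ne.symm hzy2) (Ne.symm hw2y) (Ne.symm hw2z) hx2.symm hx1.symm ha1.symm hzz12
  have hznL23 : z3 ∉ L2 :=
    not_mem_line_cn hxyne hL2 hxL2 hzL2 huL2 eL2 hne2 (Ne.symm hu2x)
      (Ne.symm hu2z) ha2 ha3 hx3 (Ne.symm hzz23)
  have hznM23 : z3 ∉ M2 :=
    not_mem_line_cn (Ne.symm hxyne) hM2 hyM2 hzM2 hwM2
      (fun p hp => by rcases eM2 p hp with h | h | h <;> tauto)
      (Ne.symm hzy2) (Ne.symm hw2y) (Ne.symm hw2z) hx2.symm hx3.symm ha3.symm (Ne.symm hzz23)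
  have hznL31 : z1 ∉ L3 :=
    not_mem_line_cn hxyne hL3 hxL3 hzL3 huL3 eL3 hne3 (Ne.symm hu3x)
      (Ne.symm hu3z) ha3 ha1 hx1 hzz13
  have hznM31 : z1 ∉ M3 :=
    not_mem_line_cn (Ne.symm hxyne) hM3 hyM3 hzM3 hwM3
      (fun p hp => by rcases eM3 p hp with h | h | h <;> tauto)
      (Ne.symm hzy3) (Ne.symm hw3y) (Ne.symm hw3z) hx3.symm hx1.symm ha1.symm hzz13
  have hznL32 : z2 ∉ L3 :=
    not_mem_line_cn hxyne hL3 hxL3 hzL3 huL3 eL3 hne3 (Ne.symm hu3x)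
      (Ne.symm hu3z) ha3 ha2 hx2 hzz23
  have hznM32 : z2 ∉ M3 :=
    not_mem_line_cn (Ne.symm hxyne) hM3 hyM3 hzM3 hwM3
      (fun p hp => by rcases eM3 p hp with h | h | h <;> tauto)
      (Ne.symm hzy3) (Ne.symm hw3y) (Ne.symm hw3z) hx3.symm hx2.symm ha2.symm hzz23
  have hL12 : L1 ≠ L2 := fun h => hznL12 (by rw [h]; exact hzL2)
  have hM12 : M1 ≠ M2 := fun h => hznM12 (by rw [h]; exact hzM2)
  have hL13 : L1 ≠ L3 := fun h => hznL13 (by rw [h]; exact hzL3)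
  have hM13 : M1 ≠ M3 := fun h => hznM13 (by rw [h]; exact hzM3)
  have hL23 : L2 ≠ L3 := fun h => hznL23 (by rw [h]; exact hzL3)
  have hM23 : M2 ≠ M3 := fun h => hznM23 (by rw [h]; exact hzM3)
  have hynL1 : y ∉ L1 := by
    intro h
    rcases eL1 y h with h' | h' | h'
    · exact hxyne h'.symm
    · exact hzy1 h'.symm
    · rw [h'] at hxy; omega
  have hxnM1 : x ∉ M1 := by
    intro h
    rcases eM1 x h with h' | h' | h'
    · exact hne1 h'
    · exact hxyne h'
    · rw [← h', SimpleGraph.dist_self] at hdw1; omega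
  have hLM1 : L1 ≠ M1 := fun h => hxnM1 (by rw [← h]; exact hxL1)
  have hynL2 : y ∉ L2 := by
    intro h
    rcases eL2 y h with h' | h' | h'
    · exact hxyne h'.symm
    · exact hzy2 h'.symm
    · rw [h'] at hxy; omega
  have hxnM2 : x ∉ M2 := by
    intro h
    rcases eM2 x h with h' | h' | h'
    · exact hne2 h'
    · exact hxyne h'
    · rw [← h', SimpleGraph.dist_self] at hdw2; omega
  have hLM2 : L2 ≠ M2 := fun h => hxnM2 (by rw [← h]; exact hxL2)
  have hynL3 : y ∉ L3 := by
    intro h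
    rcases eL3 y h with h' | h' | h'
    · exact hxyne h'.symm
    · exact hzy3 h'.symm
    · rw [h'] at hxy; omega
  have hxnM3 : x ∉ M3 := by
    intro h
    rcases eM3 x h with h' | h' | h'
    · exact hne3 h'
    · exact hxyne h'
    · rw [← h', SimpleGraph.dist_self] at hdw3; omega
  have hLM3 : L3 ≠ M3 := fun h => hxnM3 (by rw [← h]; exact hxL3)
  have hww12 : w1 ≠ w2 := fun h =>
    hM12 (line_unique hM1 hM2 (Ne.symm hw1y) hyM1 hwM1 hyM2 (by rw [h]; exact hwM2))
  have hww13 : w1 ≠ w3 := fun h =>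
    hM13 (line_unique hM1 hM3 (Ne.symm hw1y) hyM1 hwM1 hyM3 (by rw [h]; exact hwM3))
  have hww23 : w2 ≠ w3 := fun h =>
    hM23 (line_unique hM2 hM3 (Ne.symm hw2y) hyM2 hwM2 hyM3 (by rw [h]; exact hwM3))
  have nzu12 : ¬ (collGraph N.Lines).Adj z1 u2 :=
    nonadj_sep hord hL1 hL2 hL12 hxL1 hxL2 hzL1 huL2 (Ne.symm hne1) hu2x
  have nzw12 : ¬ (collGraph N.Lines).Adj z1 w2 :=
    nonadj_sep hord hM1 hM2 hM12 hyM1 hyM2 hzM1 hwM2 hzy1 hw2y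
  have hdzu12 : (collGraph N.Lines).dist z1 u2 = 2 :=
    dist_eq_two_of N (fun h => hznL21 (by rw [h]; exact huL2)) nzu12
      hx1.symm (adj_line hL2 hxL2 huL2 (Ne.symm hu2x))
  have hdzw12 : (collGraph N.Lines).dist z1 w2 = 2 :=
    dist_eq_two_of N (fun h => by rw [h] at hd1; omega) nzw12
      ha1 (adj_line hM2 hyM2 hwM2 (Ne.symm hw2y))
  have nzu13 : ¬ (collGraph N.Lines).Adj z1 u3 :=
    nonadj_sep hord hL1 hL3 hL13 hxL1 hxL3 hzL1 huL3 (Ne.symm hne1) hu3x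
  have nzw13 : ¬ (collGraph N.Lines).Adj z1 w3 :=
    nonadj_sep hord hM1 hM3 hM13 hyM1 hyM3 hzM1 hwM3 hzy1 hw3y
  have hdzu13 : (collGraph N.Lines).dist z1 u3 = 2 :=
    dist_eq_two_of N (fun h => hznL31 (by rw [h]; exact huL3)) nzu13
      hx1.symm (adj_line hL3 hxL3 huL3 (Ne.symm hu3x))
  have hdzw13 : (collGraph N.Lines).dist z1 w3 = 2 :=
    dist_eq_two_of N (fun h => by rw [h] at hd1; omega) nzw13
      ha1 (adj_line hM3 hyM3 hwM3 (Ne.symm hw3y))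
  have nzu21 : ¬ (collGraph N.Lines).Adj z2 u1 :=
    nonadj_sep hord hL2 hL1 (Ne.symm hL12) hxL2 hxL1 hzL2 huL1 (Ne.symm hne2) hu1x
  have nzw21 : ¬ (collGraph N.Lines).Adj z2 w1 :=
    nonadj_sep hord hM2 hM1 (Ne.symm hM12) hyM2 hyM1 hzM2 hwM1 hzy2 hw1y
  have hdzu21 : (collGraph N.Lines).dist z2 u1 = 2 :=
    dist_eq_two_of N (fun h => hznL12 (by rw [h]; exact huL1)) nzu21
      hx2.symm (adj_line hL1 hxL1 huL1 (Ne.symm hu1x))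
  have hdzw21 : (collGraph N.Lines).dist z2 w1 = 2 :=
    dist_eq_two_of N (fun h => by rw [h] at hd2; omega) nzw21
      ha2 (adj_line hM1 hyM1 hwM1 (Ne.symm hw1y))
  have nzu23 : ¬ (collGraph N.Lines).Adj z2 u3 :=
    nonadj_sep hord hL2 hL3 hL23 hxL2 hxL3 hzL2 huL3 (Ne.symm hne2) hu3x
  have nzw23 : ¬ (collGraph N.Lines).Adj z2 w3 :=
    nonadj_sep hord hM2 hM3 hM23 hyM2 hyM3 hzM2 hwM3 hzy2 hw3y
  have hdzu23 : (collGraph N.Lines).dist z2 u3 = 2 :=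
    dist_eq_two_of N (fun h => hznL32 (by rw [h]; exact huL3)) nzu23
      hx2.symm (adj_line hL3 hxL3 huL3 (Ne.symm hu3x))
  have hdzw23 : (collGraph N.Lines).dist z2 w3 = 2 :=
    dist_eq_two_of N (fun h => by rw [h] at hd2; omega) nzw23
      ha2 (adj_line hM3 hyM3 hwM3 (Ne.symm hw3y))
  have nzu31 : ¬ (collGraph N.Lines).Adj z3 u1 :=
    nonadj_sep hord hL3 hL1 (Ne.symm hL13) hxL3 hxL1 hzL3 huL1 (Ne.symm hne3) hu1x
  have nzw31 : ¬ (collGraph N.Lines).Adj z3 w1 :=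
    nonadj_sep hord hM3 hM1 (Ne.symm hM13) hyM3 hyM1 hzM3 hwM1 hzy3 hw1y
  have hdzu31 : (collGraph N.Lines).dist z3 u1 = 2 :=
    dist_eq_two_of N (fun h => hznL13 (by rw [h]; exact huL1)) nzu31
      hx3.symm (adj_line hL1 hxL1 huL1 (Ne.symm hu1x))
  have hdzw31 : (collGraph N.Lines).dist z3 w1 = 2 :=
    dist_eq_two_of N (fun h => by rw [h] at hd3; omega) nzw31
      ha3 (adj_line hM1 hyM1 hwM1 (Ne.symm hw1y))
  have nzu32 : ¬ (collGraph N.Lines).Adj z3 u2 :=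
    nonadj_sep hord hL3 hL2 (Ne.symm hL23) hxL3 hxL2 hzL3 huL2 (Ne.symm hne3) hu2x
  have nzw32 : ¬ (collGraph N.Lines).Adj z3 w2 :=
    nonadj_sep hord hM3 hM2 (Ne.symm hM23) hyM3 hyM2 hzM3 hwM2 hzy3 hw2y
  have hdzu32 : (collGraph N.Lines).dist z3 u2 = 2 :=
    dist_eq_two_of N (fun h => hznL23 (by rw [h]; exact huL2)) nzu32
      hx3.symm (adj_line hL2 hxL2 huL2 (Ne.symm hu2x))
  have hdzw32 : (collGraph N.Lines).dist z3 w2 = 2 :=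
    dist_eq_two_of N (fun h => by rw [h] at hd3; omega) nzw32
      ha3 (adj_line hM2 hyM2 hwM2 (Ne.symm hw2y))
  have nww12 : ¬ (collGraph N.Lines).Adj w1 w2 :=
    nonadj_sep hord hM1 hM2 hM12 hyM1 hyM2 hwM1 hwM2 hw1y hw2y
  have nww13 : ¬ (collGraph N.Lines).Adj w1 w3 :=
    nonadj_sep hord hM1 hM3 hM13 hyM1 hyM3 hwM1 hwM3 hw1y hw3y
  have nww23 : ¬ (collGraph N.Lines).Adj w2 w3 :=
    nonadj_sep hord hM2 hM3 hM23 hyM2 hyM3 hwM2 hwM3 hw2y hw3y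
  have hwu12 : (collGraph N.Lines).Adj w1 u2 := by
    have hcm1 : (collGraph N.Lines).dist w1 x = 2 := by
      rw [SimpleGraph.dist_comm]; exact hdw1
    have hcm2 : (collGraph N.Lines).dist w1 z2 = 2 := by
      rw [SimpleGraph.dist_comm]; exact hdzw21
    have he := eval_eq hL2 (x := w1) hxL2 hzL2 huL2 eL2 hne2 (Ne.symm hu2x)
      (Ne.symm hu2z) (by rw [hcm1, hcm2])
    exact SimpleGraph.dist_eq_one_iff_adj.mp (by omega)
  have hwu13 : (collGraph N.Lines).Adj w1 u3 := by
    have hcm1 : (collGraph N.Lines).dist w1 x = 2 := by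
      rw [SimpleGraph.dist_comm]; exact hdw1
    have hcm2 : (collGraph N.Lines).dist w1 z3 = 2 := by
      rw [SimpleGraph.dist_comm]; exact hdzw31
    have he := eval_eq hL3 (x := w1) hxL3 hzL3 huL3 eL3 hne3 (Ne.symm hu3x)
      (Ne.symm hu3z) (by rw [hcm1, hcm2])
    exact SimpleGraph.dist_eq_one_iff_adj.mp (by omega)
  have hwu21 : (collGraph N.Lines).Adj w2 u1 := by
    have hcm1 : (collGraph N.Lines).dist w2 x = 2 := by
      rw [SimpleGraph.dist_comm]; exact hdw2
    have hcm2 : (collGraph N.Lines).dist w2 z1 = 2 := by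
      rw [SimpleGraph.dist_comm]; exact hdzw12
    have he := eval_eq hL1 (x := w2) hxL1 hzL1 huL1 eL1 hne1 (Ne.symm hu1x)
      (Ne.symm hu1z) (by rw [hcm1, hcm2])
    exact SimpleGraph.dist_eq_one_iff_adj.mp (by omega)
  have hwu23 : (collGraph N.Lines).Adj w2 u3 := by
    have hcm1 : (collGraph N.Lines).dist w2 x = 2 := by
      rw [SimpleGraph.dist_comm]; exact hdw2
    have hcm2 : (collGraph N.Lines).dist w2 z3 = 2 := by
      rw [SimpleGraph.dist_comm]; exact hdzw32
    have he := eval_eq hL3 (x := w2) hxL3 hzL3 huL3 eL3 hne3 (Ne.symm hu3x)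
      (Ne.symm hu3z) (by rw [hcm1, hcm2])
    exact SimpleGraph.dist_eq_one_iff_adj.mp (by omega)
  have hwu31 : (collGraph N.Lines).Adj w3 u1 := by
    have hcm1 : (collGraph N.Lines).dist w3 x = 2 := by
      rw [SimpleGraph.dist_comm]; exact hdw3
    have hcm2 : (collGraph N.Lines).dist w3 z1 = 2 := by
      rw [SimpleGraph.dist_comm]; exact hdzw13
    have he := eval_eq hL1 (x := w3) hxL1 hzL1 huL1 eL1 hne1 (Ne.symm hu1x)
      (Ne.symm hu1z) (by rw [hcm1, hcm2])
    exact SimpleGraph.dist_eq_one_iff_adj.mp (by omega)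
  have hwu32 : (collGraph N.Lines).Adj w3 u2 := by
    have hcm1 : (collGraph N.Lines).dist w3 x = 2 := by
      rw [SimpleGraph.dist_comm]; exact hdw3
    have hcm2 : (collGraph N.Lines).dist w3 z2 = 2 := by
      rw [SimpleGraph.dist_comm]; exact hdzw23
    have he := eval_eq hL2 (x := w3) hxL2 hzL2 huL2 eL2 hne2 (Ne.symm hu2x)
      (Ne.symm hu2z) (by rw [hcm1, hcm2])
    exact SimpleGraph.dist_eq_one_iff_adj.mp (by omega)
  have lineW : ∀ wa uj zc : P, (collGraph N.Lines).Adj wa uj →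
      (collGraph N.Lines).dist x wa = 2 → (collGraph N.Lines).dist x uj = 1 →
      (collGraph N.Lines).dist zc wa = 2 → (collGraph N.Lines).dist zc uj = 2 →
      ∃ M t, M ∈ N.Lines ∧ wa ∈ M ∧ uj ∈ M ∧ t ∈ M ∧ t ≠ wa ∧ t ≠ uj ∧
        (∀ p ∈ M, p = wa ∨ p = uj ∨ p = t) ∧ (collGraph N.Lines).Adj zc t ∧
        (collGraph N.Lines).dist x t = 2 := by
    intro wa uj zc hadj hwa2 huj1 hzwa hzuj
    obtain ⟨hne, M, hM, hwaM, hujM⟩ := id hadj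
    obtain ⟨t, htM, htwa, htuj, hex⟩ := third_point hord hM hwaM hujM hne
    have hxnM : x ∉ M := by
      intro hxM
      have hxwa : x ≠ wa := by
        intro h; rw [← h, SimpleGraph.dist_self] at hwa2; omega
      have : (collGraph N.Lines).dist x wa = 1 :=
        SimpleGraph.dist_eq_one_iff_adj.mpr (adj_line hM hxM hwaM hxwa)
      omega
    have hzt := eval_eq hM (x := zc) hwaM hujM htM hex hne (Ne.symm htwa) (Ne.symm htuj)
      (by rw [hzwa, hzuj])
    rw [hzwa] at hzt
    have hdxt : (collGraph N.Lines).dist x t = 2 :=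
      dist_on_far_line hM huj1 hujM hxnM htM htuj
    exact ⟨M, t, hM, hwaM, hujM, htM, htwa, htuj, hex,
      SimpleGraph.dist_eq_one_iff_adj.mp (by omega), hdxt⟩
  have U1 : ∀ p, (collGraph N.Lines).dist x p = 2 → (collGraph N.Lines).Adj u1 p →
      ((collGraph N.Lines).Adj z1 p ∨ (collGraph N.Lines).Adj z2 p ∨ (collGraph N.Lines).Adj z3 p) := by
    obtain ⟨Ma, ta, hMa, hwaMa, hujMa, htaMa, htawa, htauj, hexMa, hzcta, hdxta⟩ :=
      lineW w2 u1 z3 hwu21 hdw2 hdu1 hdzw32 hdzu31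
    obtain ⟨Mb, tb, hMb, hwbMb, hujMb, htbMb, htbwb, htbuj, hexMb, hzctb, hdxtb⟩ :=
      lineW w3 u1 z2 hwu31 hdw3 hdu1 hdzw23 hdzu21
    have hMaL : Ma ≠ L1 := by
      intro h
      rcases eL1 w2 (by rw [← h]; exact hwaMa) with h' | h' | h'
      · rw [h'] at hdw2; rw [SimpleGraph.dist_self] at hdw2; omega
      · rw [h'] at hdw2; omega
      · rw [h'] at hdw2; omega
    have hMbL : Mb ≠ L1 := by
      intro h
      rcases eL1 w3 (by rw [← h]; exact hwbMb) with h' | h' | h'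
      · rw [h'] at hdw3; rw [SimpleGraph.dist_self] at hdw3; omega
      · rw [h'] at hdw3; omega
      · rw [h'] at hdw3; omega
    have hMab : Ma ≠ Mb := by
      intro h
      have hwbMa : w3 ∈ Ma := by rw [h]; exact hwbMb
      rcases hexMa w3 hwbMa with h' | h' | h'
      · exact hww23 h'.symm
      · rw [h'] at hdw3; omega
      · exact nww23 (adj_line hMa hwaMa hwbMa hww23)
    obtain ⟨K, hK, hKa, hKb, hexU⟩ := three_enum_two (hord.2 u1)
      (⟨hL1, huL1⟩ : L1 ∈ {L | L ∈ N.Lines ∧ u1 ∈ L}) ⟨hMa, hujMa⟩ (Ne.symm hMaL)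
    have hMbK : Mb = K := by
      rcases hexU Mb ⟨hMb, hujMb⟩ with h | h | h
      · exact absurd h hMbL
      · exact absurd h (Ne.symm hMab)
      · exact h
    intro p hp2 hadjup
    obtain ⟨hneup, L', hL', huL', hpL'⟩ := hadjup
    rcases hexU L' ⟨hL', huL'⟩ with rfl | rfl | hK'
    · rcases eL1 p hpL' with h' | h' | h'
      · rw [h', SimpleGraph.dist_self] at hp2; omega
      · rw [h'] at hp2; rw [hd1] at hp2; omega
      · exact absurd h'.symm hneup
    · rcases hexMa p hpL' with h' | h' | h'
      · subst h'
        exact by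
          have : (collGraph N.Lines).Adj z2 p := adj_line hM2 hzM2 hwM2 (Ne.symm hw2z)
          tauto
      · exact absurd h'.symm hneup
      · subst h'
        have : (collGraph N.Lines).Adj z3 p := hzcta
        tauto
    · rw [← hMbK] at hK'
      subst hK'
      rcases hexMb p hpL' with h' | h' | h'
      · subst h'
        have : (collGraph N.Lines).Adj z3 p := adj_line hM3 hzM3 hwM3 (Ne.symm hw3z)
        tauto
      · exact absurd h'.symm hneup
      · subst h'
        have : (collGraph N.Lines).Adj z2 p := hzctb
        tauto
  have U2 : ∀ p, (collGraph N.Lines).dist x p = 2 → (collGraph N.Lines).Adj u2 p →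
      ((collGraph N.Lines).Adj z1 p ∨ (collGraph N.Lines).Adj z2 p ∨ (collGraph N.Lines).Adj z3 p) := by
    obtain ⟨Ma, ta, hMa, hwaMa, hujMa, htaMa, htawa, htauj, hexMa, hzcta, hdxta⟩ :=
      lineW w1 u2 z3 hwu12 hdw1 hdu2 hdzw31 hdzu32
    obtain ⟨Mb, tb, hMb, hwbMb, hujMb, htbMb, htbwb, htbuj, hexMb, hzctb, hdxtb⟩ :=
      lineW w3 u2 z1 hwu32 hdw3 hdu2 hdzw13 hdzu12
    have hMaL : Ma ≠ L2 := by
      intro h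
      rcases eL2 w1 (by rw [← h]; exact hwaMa) with h' | h' | h'
      · rw [h'] at hdw1; rw [SimpleGraph.dist_self] at hdw1; omega
      · rw [h'] at hdw1; omega
      · rw [h'] at hdw1; omega
    have hMbL : Mb ≠ L2 := by
      intro h
      rcases eL2 w3 (by rw [← h]; exact hwbMb) with h' | h' | h'
      · rw [h'] at hdw3; rw [SimpleGraph.dist_self] at hdw3; omega
      · rw [h'] at hdw3; omega
      · rw [h'] at hdw3; omega
    have hMab : Ma ≠ Mb := by
      intro h
      have hwbMa : w3 ∈ Ma := by rw [h]; exact hwbMb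
      rcases hexMa w3 hwbMa with h' | h' | h'
      · exact hww13 h'.symm
      · rw [h'] at hdw3; omega
      · exact nww13 (adj_line hMa hwaMa hwbMa hww13)
    obtain ⟨K, hK, hKa, hKb, hexU⟩ := three_enum_two (hord.2 u2)
      (⟨hL2, huL2⟩ : L2 ∈ {L | L ∈ N.Lines ∧ u2 ∈ L}) ⟨hMa, hujMa⟩ (Ne.symm hMaL)
    have hMbK : Mb = K := by
      rcases hexU Mb ⟨hMb, hujMb⟩ with h | h | h
      · exact absurd h hMbL
      · exact absurd h (Ne.symm hMab)
      · exact h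
    intro p hp2 hadjup
    obtain ⟨hneup, L', hL', huL', hpL'⟩ := hadjup
    rcases hexU L' ⟨hL', huL'⟩ with rfl | rfl | hK'
    · rcases eL2 p hpL' with h' | h' | h'
      · rw [h', SimpleGraph.dist_self] at hp2; omega
      · rw [h'] at hp2; rw [hd2] at hp2; omega
      · exact absurd h'.symm hneup
    · rcases hexMa p hpL' with h' | h' | h'
      · subst h'
        exact by
          have : (collGraph N.Lines).Adj z1 p := adj_line hM1 hzM1 hwM1 (Ne.symm hw1z)
          tauto
      · exact absurd h'.symm hneup
      · subst h'
        have : (collGraph N.Lines).Adj z3 p := hzcta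
        tauto
    · rw [← hMbK] at hK'
      subst hK'
      rcases hexMb p hpL' with h' | h' | h'
      · subst h'
        have : (collGraph N.Lines).Adj z3 p := adj_line hM3 hzM3 hwM3 (Ne.symm hw3z)
        tauto
      · exact absurd h'.symm hneup
      · subst h'
        have : (collGraph N.Lines).Adj z1 p := hzctb
        tauto
  have U3 : ∀ p, (collGraph N.Lines).dist x p = 2 → (collGraph N.Lines).Adj u3 p →
      ((collGraph N.Lines).Adj z1 p ∨ (collGraph N.Lines).Adj z2 p ∨ (collGraph N.Lines).Adj z3 p) := by
    obtain ⟨Ma, ta, hMa, hwaMa, hujMa, htaMa, htawa, htauj, hexMa, hzcta, hdxta⟩ :=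
      lineW w1 u3 z2 hwu13 hdw1 hdu3 hdzw21 hdzu23
    obtain ⟨Mb, tb, hMb, hwbMb, hujMb, htbMb, htbwb, htbuj, hexMb, hzctb, hdxtb⟩ :=
      lineW w2 u3 z1 hwu23 hdw2 hdu3 hdzw12 hdzu13
    have hMaL : Ma ≠ L3 := by
      intro h
      rcases eL3 w1 (by rw [← h]; exact hwaMa) with h' | h' | h'
      · rw [h'] at hdw1; rw [SimpleGraph.dist_self] at hdw1; omega
      · rw [h'] at hdw1; omega
      · rw [h'] at hdw1; omega
    have hMbL : Mb ≠ L3 := by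
      intro h
      rcases eL3 w2 (by rw [← h]; exact hwbMb) with h' | h' | h'
      · rw [h'] at hdw2; rw [SimpleGraph.dist_self] at hdw2; omega
      · rw [h'] at hdw2; omega
      · rw [h'] at hdw2; omega
    have hMab : Ma ≠ Mb := by
      intro h
      have hwbMa : w2 ∈ Ma := by rw [h]; exact hwbMb
      rcases hexMa w2 hwbMa with h' | h' | h'
      · exact hww12 h'.symm
      · rw [h'] at hdw2; omega
      · exact nww12 (adj_line hMa hwaMa hwbMa hww12)
    obtain ⟨K, hK, hKa, hKb, hexU⟩ := three_enum_two (hord.2 u3)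
      (⟨hL3, huL3⟩ : L3 ∈ {L | L ∈ N.Lines ∧ u3 ∈ L}) ⟨hMa, hujMa⟩ (Ne.symm hMaL)
    have hMbK : Mb = K := by
      rcases hexU Mb ⟨hMb, hujMb⟩ with h | h | h
      · exact absurd h hMbL
      · exact absurd h (Ne.symm hMab)
      · exact h
    intro p hp2 hadjup
    obtain ⟨hneup, L', hL', huL', hpL'⟩ := hadjup
    rcases hexU L' ⟨hL', huL'⟩ with rfl | rfl | hK'
    · rcases eL3 p hpL' with h' | h' | h'
      · rw [h', SimpleGraph.dist_self] at hp2; omega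
      · rw [h'] at hp2; rw [hd3] at hp2; omega
      · exact absurd h'.symm hneup
    · rcases hexMa p hpL' with h' | h' | h'
      · subst h'
        exact by
          have : (collGraph N.Lines).Adj z1 p := adj_line hM1 hzM1 hwM1 (Ne.symm hw1z)
          tauto
      · exact absurd h'.symm hneup
      · subst h'
        have : (collGraph N.Lines).Adj z2 p := hzcta
        tauto
    · rw [← hMbK] at hK'
      subst hK'
      rcases hexMb p hpL' with h' | h' | h'
      · subst h'
        have : (collGraph N.Lines).Adj z2 p := adj_line hM2 hzM2 hwM2 (Ne.symm hw2z)
        tauto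
      · exact absurd h'.symm hneup
      · subst h'
        have : (collGraph N.Lines).Adj z1 p := hzctb
        tauto
  obtain ⟨Kx, hKx, hKx1, hKx2, hexX0⟩ := three_enum_two (hord.2 x)
    (⟨hL1, hxL1⟩ : L1 ∈ {L | L ∈ N.Lines ∧ x ∈ L}) ⟨hL2, hxL2⟩ hL12
  have hL3K : L3 = Kx := by
    rcases hexX0 L3 ⟨hL3, hxL3⟩ with h | h | h
    · exact absurd h (Ne.symm hL13)
    · exact absurd h (Ne.symm hL23)
    · exact h
  have hexX : ∀ L ∈ N.Lines, x ∈ L → L = L1 ∨ L = L2 ∨ L = L3 := by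
    intro L hL hxL
    rcases hexX0 L ⟨hL, hxL⟩ with h | h | h
    · exact Or.inl h
    · exact Or.inr (Or.inl h)
    · exact Or.inr (Or.inr (by rw [hL3K]; exact h))
  obtain ⟨K1, hK1mem, hK1L, hK1M, hexZ1⟩ := three_enum_two (hord.2 z1)
    (⟨hL1, hzL1⟩ : L1 ∈ {L | L ∈ N.Lines ∧ z1 ∈ L}) ⟨hM1, hzM1⟩ hLM1
  obtain ⟨K2, hK2mem, hK2L, hK2M, hexZ2⟩ := three_enum_two (hord.2 z2)
    (⟨hL2, hzL2⟩ : L2 ∈ {L | L ∈ N.Lines ∧ z2 ∈ L}) ⟨hM2, hzM2⟩ hLM2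
  obtain ⟨K3, hK3mem, hK3L, hK3M, hexZ3⟩ := three_enum_two (hord.2 z3)
    (⟨hL3, hzL3⟩ : L3 ∈ {L | L ∈ N.Lines ∧ z3 ∈ L}) ⟨hM3, hzM3⟩ hLM3
  have hcov : {p | (collGraph N.Lines).dist x p = 2} ⊆
      (({y, w1} ∪ (K1 \ {z1})) ∪ (({w2} ∪ (K2 \ {z2})) ∪ ({w3} ∪ (K3 \ {z3})))) := by
    intro p hp
    have hp2 : (collGraph N.Lines).dist x p = 2 := hp
    have hz : (collGraph N.Lines).Adj z1 p ∨ (collGraph N.Lines).Adj z2 p ∨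
        (collGraph N.Lines).Adj z3 p := by
      obtain ⟨c, hxc, hcp⟩ := midpoint_of_dist_two N hp2
      obtain ⟨hnexc, Lc, hLc, hxLc, hcLc⟩ := id hxc
      rcases hexX Lc hLc hxLc with rfl | rfl | rfl
      · rcases eL1 c hcLc with h' | h' | h'
        · exact absurd h'.symm hnexc
        · subst h'; tauto
        · subst h'; exact U1 p hp2 hcp
      · rcases eL2 c hcLc with h' | h' | h'
        · exact absurd h'.symm hnexc
        · subst h'; tauto
        · subst h'; exact U2 p hp2 hcp
      · rcases eL3 c hcLc with h' | h' | h'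
        · exact absurd h'.symm hnexc
        · subst h'; tauto
        · subst h'; exact U3 p hp2 hcp
    rcases hz with h | h | h
    · obtain ⟨hnezp, L', hL', hzL', hpL'⟩ := h
      rcases hexZ1 L' ⟨hL', hzL'⟩ with rfl | rfl | rfl
      · rcases eL1 p hpL' with h' | h' | h'
        · rw [h', SimpleGraph.dist_self] at hp2; omega
        · exact absurd h'.symm hnezp
        · rw [h'] at hp2; rw [hdu1] at hp2; omega
      · rcases eM1 p hpL' with h' | h' | h'
        · exact absurd h'.symm hnezp
        · subst h'
          exact Or.inl (Or.inl (by simp))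
        · subst h'
          exact Or.inl (Or.inl (by simp))
      · exact Or.inl (Or.inr ⟨hpL', by simpa using fun hh => hnezp hh.symm⟩)
    · obtain ⟨hnezp, L', hL', hzL', hpL'⟩ := h
      rcases hexZ2 L' ⟨hL', hzL'⟩ with rfl | rfl | rfl
      · rcases eL2 p hpL' with h' | h' | h'
        · rw [h', SimpleGraph.dist_self] at hp2; omega
        · exact absurd h'.symm hnezp
        · rw [h'] at hp2; rw [hdu2] at hp2; omega
      · rcases eM2 p hpL' with h' | h' | h'
        · exact absurd h'.symm hnezp
        · subst h'
          exact Or.inl (Or.inl (by simp))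
        · subst h'
          exact Or.inr (Or.inl (Or.inl (by simp)))
      · exact Or.inr (Or.inl (Or.inr ⟨hpL', by simpa using fun hh => hnezp hh.symm⟩))
    · obtain ⟨hnezp, L', hL', hzL', hpL'⟩ := h
      rcases hexZ3 L' ⟨hL', hzL'⟩ with rfl | rfl | rfl
      · rcases eL3 p hpL' with h' | h' | h'
        · rw [h', SimpleGraph.dist_self] at hp2; omega
        · exact absurd h'.symm hnezp
        · rw [h'] at hp2; rw [hdu3] at hp2; omega
      · rcases eM3 p hpL' with h' | h' | h'
        · exact absurd h'.symm hnezp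
        · subst h'
          exact Or.inl (Or.inl (by simp))
        · subst h'
          exact Or.inr (Or.inr (Or.inl (by simp)))
      · exact Or.inr (Or.inr (Or.inr ⟨hpL', by simpa using fun hh => hnezp hh.symm⟩))
  have hzK1 : z1 ∈ K1 := hK1mem.2
  have hzK2 : z2 ∈ K2 := hK2mem.2
  have hzK3 : z3 ∈ K3 := hK3mem.2
  have hKd1 : (K1 \ {z1}).ncard = 2 := by
    rw [Set.ncard_diff_singleton_of_mem hzK1, hord.1 _ hK1mem.1]
  have hKd2 : (K2 \ {z2}).ncard = 2 := by
    rw [Set.ncard_diff_singleton_of_mem hzK2, hord.1 _ hK2mem.1]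
  have hKd3 : (K3 \ {z3}).ncard = 2 := by
    rw [Set.ncard_diff_singleton_of_mem hzK3, hord.1 _ hK3mem.1]
  have hyw : ({y, w1} : Set P).ncard ≤ 2 :=
    (Set.ncard_insert_le _ _).trans (by simp)
  have hA : (({y, w1} : Set P) ∪ (K1 \ {z1})).ncard ≤ 4 := by
    have := Set.ncard_union_le ({y, w1} : Set P) (K1 \ {z1})
    omega
  have hB : (({w2} : Set P) ∪ (K2 \ {z2})).ncard ≤ 3 := by
    have := Set.ncard_union_le ({w2} : Set P) (K2 \ {z2})
    rw [Set.ncard_singleton] at this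
    omega
  have hC : (({w3} : Set P) ∪ (K3 \ {z3})).ncard ≤ 3 := by
    have := Set.ncard_union_le ({w3} : Set P) (K3 \ {z3})
    rw [Set.ncard_singleton] at this
    omega
  have hBC : ((({w2} : Set P) ∪ (K2 \ {z2})) ∪ (({w3} : Set P) ∪ (K3 \ {z3}))).ncard ≤ 6 := by
    have := Set.ncard_union_le (({w2} : Set P) ∪ (K2 \ {z2})) (({w3} : Set P) ∪ (K3 \ {z3}))
    omega
  have htot : ((({y, w1} : Set P) ∪ (K1 \ {z1})) ∪
      ((({w2} : Set P) ∪ (K2 \ {z2})) ∪ (({w3} : Set P) ∪ (K3 \ {z3})))).ncard ≤ 10 := by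
    have := Set.ncard_union_le (({y, w1} : Set P) ∪ (K1 \ {z1}))
      ((({w2} : Set P) ∪ (K2 \ {z2})) ∪ (({w3} : Set P) ∪ (K3 \ {z3})))
    omega
  have hmono := Set.ncard_le_ncard hcov (Set.toFinite _)
  rw [h12] at hmono
  omega

end NoMu3
end NHX

/-- Let `N` be a near hexagon of order `(2,2)`.  If `N` has `63`
points then any two points at distance `2` have exactly one common neighbor
(so `N` is a generalized hexagon of order `(2,2)`); if `N` has `27` points
then any two points at distance `2` have exactly two common neighbors. -/
theorem near_hexagon_mu_by_card {P : Type*} (N : NearPolygon P 3)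
    (hord : N.hasOrder 2 2) :
    (Nat.card P = 63 → ∀ x y : P, (collGraph N.Lines).dist x y = 2 →
      {z : P | (collGraph N.Lines).Adj x z ∧ (collGraph N.Lines).Adj z y}.ncard = 1) ∧
    (Nat.card P = 27 → ∀ x y : P, (collGraph N.Lines).dist x y = 2 →
      {z : P | (collGraph N.Lines).Adj x z ∧ (collGraph N.Lines).Adj z y}.ncard = 2) := by
  have hseteq : ∀ x y : P,
      {z : P | (collGraph N.Lines).Adj x z ∧ (collGraph N.Lines).Adj z y}
        = {c : P | (collGraph N.Lines).dist x c = 1 ∧ (collGraph N.Lines).Adj c y} := by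
    intro x y
    ext c
    simp only [Set.mem_setOf_eq, SimpleGraph.dist_eq_one_iff_adj]
  constructor
  · intro hcard x y hdist
    have hfin : Finite P := (Nat.card_ne_zero.mp (by rw [hcard]; omega)).2
    obtain ⟨h3, h63, _⟩ := NHX.count_n2 hord hfin x
    have hn2 : {p | (collGraph N.Lines).dist x p = 2}.ncard = 24 := by
      rw [hcard] at h3; omega
    rw [hseteq x y]
    exact h63 hn2 y hdist
  · intro hcard x y hdist
    have hfin : Finite P := (Nat.card_ne_zero.mp (by rw [hcard]; omega)).2
    obtain ⟨h3, _, h27⟩ := NHX.count_n2 hord hfin x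
    have hn2 : {p | (collGraph N.Lines).dist x p = 2}.ncard = 12 := by
      rw [hcard] at h3; omega
    have hne3 : ∀ y', (collGraph N.Lines).dist x y' = 2 →
        {c : P | (collGraph N.Lines).dist x c = 1 ∧ (collGraph N.Lines).Adj c y'}.ncard ≠ 3 :=
      fun y' hy' hmu => NHX.no_mu3 hord hfin hy' hn2 hmu
    rw [hseteq x y]
    exact h27 hn2 hne3 y hdist
end

section
/- The near hexagon 𝕃₃×𝕃₃×𝕃₃ contains no full isometrically embedded subgeometry that is a generalized hexagon of order (2,1). -/
/-- The lines of the near hexagon `𝕃₃ × 𝕃₃ × 𝕃₃`: the points are the triples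
in `(Fin 3)³` and the lines are the triples of points agreeing in two
coordinates and taking all three values in the remaining coordinate. -/
def L3cube : Set (Set (Fin 3 × Fin 3 × Fin 3)) :=
  {L | (∃ a b : Fin 3, L = {p | p.2.1 = a ∧ p.2.2 = b}) ∨
       (∃ a b : Fin 3, L = {p | p.1 = a ∧ p.2.2 = b}) ∨
       (∃ a b : Fin 3, L = {p | p.1 = a ∧ p.2.1 = b})}

/- ######################  auxiliary development  ###################### -/

abbrev Pt := Fin 3 × Fin 3 × Fin 3

def co (i : Fin 3) (p : Pt) : Fin 3 := ![p.1, p.2.1, p.2.2] i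

lemma pt_ext {p q : Pt} (h : ∀ i, co i p = co i q) : p = q := by
  have h0 := h 0; have h1 := h 1; have h2 := h 2
  simp [co] at h0 h1 h2
  exact Prod.ext h0 (Prod.ext h1 h2)

def cline (e : Fin 3) (q : Pt) : Set Pt := {p | ∀ i, i ≠ e → co i p = co i q}

lemma mem_cline_self (e : Fin 3) (q : Pt) : q ∈ cline e q := fun _ _ => rfl

lemma cline_mem (e : Fin 3) (q : Pt) : cline e q ∈ L3cube := by
  fin_cases e
  · left; exact ⟨q.2.1, q.2.2, by
      ext p; constructor
      · intro h; exact ⟨h 1 (by decide), h 2 (by decide)⟩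
      · rintro ⟨h1, h2⟩ i hi; fin_cases i
        · simp at hi
        · exact h1
        · exact h2⟩
  · right; left; exact ⟨q.1, q.2.2, by
      ext p; constructor
      · intro h; exact ⟨h 0 (by decide), h 2 (by decide)⟩
      · rintro ⟨h1, h2⟩ i hi; fin_cases i
        · exact h1
        · simp at hi
        · exact h2⟩
  · right; right; exact ⟨q.1, q.2.1, by
      ext p; constructor
      · intro h; exact ⟨h 0 (by decide), h 1 (by decide)⟩
      · rintro ⟨h1, h2⟩ i hi; fin_cases i
        · exact h1
        · exact h2
        · simp at hi⟩

lemma L3_eq_cline {L : Set Pt} (hL : L ∈ L3cube) : ∃ e q, L = cline e q := by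
  rcases hL with ⟨a, b, rfl⟩ | ⟨a, b, rfl⟩ | ⟨a, b, rfl⟩
  · exact ⟨0, (0, a, b), by
      ext p; constructor
      · rintro ⟨h1, h2⟩ i hi; fin_cases i
        · simp at hi
        · exact h1
        · exact h2
      · intro h; exact ⟨h 1 (by decide), h 2 (by decide)⟩⟩
  · exact ⟨1, (a, 0, b), by
      ext p; constructor
      · rintro ⟨h1, h2⟩ i hi; fin_cases i
        · exact h1
        · simp at hi
        · exact h2
      · intro h; exact ⟨h 0 (by decide), h 2 (by decide)⟩⟩
  · exact ⟨2, (a, b, 0), by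
      ext p; constructor
      · rintro ⟨h1, h2⟩ i hi; fin_cases i
        · exact h1
        · exact h2
        · simp at hi
      · intro h; exact ⟨h 0 (by decide), h 1 (by decide)⟩⟩

lemma cline_eq_of_mem {e : Fin 3} {p q : Pt} (h : p ∈ cline e q) : cline e p = cline e q := by
  ext r; constructor
  · intro hr i hi; exact (hr i hi).trans (h i hi)
  · intro hr i hi; exact (hr i hi).trans (h i hi).symm

lemma cline_ne {e : Fin 3} {p q r : Pt} (hp : p ∈ cline e r) (hq : q ∈ cline e r)
    (h : p ≠ q) : co e p ≠ co e q := by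
  intro he
  apply h
  apply pt_ext
  intro i
  by_cases hi : i = e
  · subst hi; exact he
  · exact (hp i hi).trans (hq i hi).symm

lemma cubeAdj_iff {p q : Pt} :
    (collGraph L3cube).Adj p q ↔ p ≠ q ∧ ∃ e, p ∈ cline e q := by
  constructor
  · rintro ⟨hne, L, hL, hp, hq⟩
    obtain ⟨e, r, rfl⟩ := L3_eq_cline hL
    exact ⟨hne, e, fun i hi => (hp i hi).trans (hq i hi).symm⟩
  · rintro ⟨hne, e, hp⟩
    exact ⟨hne, cline e q, cline_mem e q, hp, fun _ _ => rfl⟩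

lemma not_cubeAdj {p q : Pt} {e1 e2 : Fin 3} (h12 : e1 ≠ e2)
    (h1 : co e1 p ≠ co e1 q) (h2 : co e2 p ≠ co e2 q) :
    ¬ (collGraph L3cube).Adj p q := by
  intro h
  obtain ⟨-, e, he⟩ := cubeAdj_iff.mp h
  rcases eq_or_ne e1 e with rfl | hne1
  · exact h2 (he e2 (Ne.symm h12))
  · exact h1 (he e1 hne1)

lemma dist_two {V : Type*} {G : SimpleGraph V} {u v w : V}
    (h1 : G.Adj u w) (h2 : G.Adj w v) (hne : u ≠ v) (hna : ¬ G.Adj u v) :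
    G.dist u v = 2 := by
  have hle : G.dist u v ≤ 2 := by
    have := SimpleGraph.dist_le (SimpleGraph.Walk.cons h1 (SimpleGraph.Walk.cons h2 SimpleGraph.Walk.nil))
    simpa using this
  have h0 : G.dist u v ≠ 0 := fun h => hne
    ((SimpleGraph.Reachable.dist_eq_zero_iff
      ⟨SimpleGraph.Walk.cons h1 (SimpleGraph.Walk.cons h2 SimpleGraph.Walk.nil)⟩).mp h)
  have h1' : G.dist u v ≠ 1 := fun h => hna (SimpleGraph.dist_eq_one_iff_adj.mp h)
  omega

lemma common_nbr {u v c : Pt} {e1 e2 : Fin 3} (h12 : e1 ≠ e2)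
    (h1 : co e1 u ≠ co e1 v) (h2 : co e2 u ≠ co e2 v)
    (hcu : (collGraph L3cube).Adj c u) (hcv : (collGraph L3cube).Adj c v) :
    (c ∈ cline e1 u ∧ c ∈ cline e2 v) ∨ (c ∈ cline e2 u ∧ c ∈ cline e1 v) := by
  obtain ⟨-, d1, hd1⟩ := cubeAdj_iff.mp hcu
  obtain ⟨-, d2, hd2⟩ := cubeAdj_iff.mp hcv
  have key1 : d1 = e1 ∨ d2 = e1 := by
    by_contra hc
    push_neg at hc
    exact h1 ((hd1 e1 (Ne.symm hc.1)).symm.trans (hd2 e1 (Ne.symm hc.2)))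
  have key2 : d1 = e2 ∨ d2 = e2 := by
    by_contra hc
    push_neg at hc
    exact h2 ((hd1 e2 (Ne.symm hc.1)).symm.trans (hd2 e2 (Ne.symm hc.2)))
  rcases key1 with rfl | rfl
  · rcases key2 with rfl | rfl
    · exact absurd rfl h12
    · exact Or.inl ⟨hd1, hd2⟩
  · rcases key2 with rfl | rfl
    · exact Or.inr ⟨hd1, hd2⟩
    · exact absurd rfl h12

lemma fin3_choice {p q r v : Fin 3} (hq : q ≠ p) (hr : r ≠ p) (hqr : q ≠ r)
    (hv : v ≠ p) : v = q ∨ v = r := by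
  revert hq hr hqr hv; revert p q r v; decide

lemma fin3_third : ∀ e1 e2 : Fin 3, e1 ≠ e2 →
    ∃ e3, e1 ≠ e3 ∧ e2 ≠ e3 ∧ ∀ i, i = e1 ∨ i = e2 ∨ i = e3 := by decide

lemma pair_rest {α : Type*} {s : Set α} {a : α} (h : s.ncard = 2) (ha : a ∈ s) :
    ∃ b, b ≠ a ∧ s = {a, b} := by
  obtain ⟨x, y, hxy, rfl⟩ := Set.ncard_eq_two.mp h
  simp only [Set.mem_insert_iff, Set.mem_singleton_iff] at ha
  rcases ha with rfl | rfl
  · exact ⟨y, hxy.symm, rfl⟩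
  · exact ⟨x, hxy, Set.pair_comm x a⟩

lemma triple_rest {α : Type*} {s : Set α} {a : α} (h : s.ncard = 3) (ha : a ∈ s) :
    ∃ b c, b ≠ c ∧ a ≠ b ∧ a ≠ c ∧ s = {a, b, c} := by
  obtain ⟨x, y, z, hxy, hxz, hyz, rfl⟩ := Set.ncard_eq_three.mp h
  simp only [Set.mem_insert_iff, Set.mem_singleton_iff] at ha
  rcases ha with rfl | rfl | rfl
  · exact ⟨y, z, hyz, hxy, hxz, rfl⟩
  · exact ⟨x, z, hxz, hxy.symm, hyz, by ext w; simp; tauto⟩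
  · exact ⟨x, y, hxy, hxz.symm, hyz.symm, by ext w; simp; tauto⟩

section Main

variable {Qt : Type} (H : NearPolygon Qt 3) (ι : Qt → Pt)

lemma adj_map (emb : IsFullIsomEmb H.Lines L3cube ι) {a b : Qt}
    (h : (collGraph H.Lines).Adj a b) : (collGraph L3cube).Adj (ι a) (ι b) := by
  obtain ⟨hne, L, hL, ha, hb⟩ := h
  exact ⟨fun he => hne (emb.inj he), ι '' L, emb.line_map L hL,
    Set.mem_image_of_mem ι ha, Set.mem_image_of_mem ι hb⟩

lemma claim_core (emb : IsFullIsomEmb H.Lines L3cube ι)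
    (gh : ∀ x y : Qt, (collGraph H.Lines).dist x y = 2 →
      ∃! z : Qt, (collGraph H.Lines).Adj x z ∧ (collGraph H.Lines).Adj z y)
    {e1 e2 e3 : Fin 3} (h12 : e1 ≠ e2) (h13 : e1 ≠ e3) (h23 : e2 ≠ e3)
    (cover : ∀ i : Fin 3, i = e1 ∨ i = e2 ∨ i = e3)
    {x y z1 z2 m1 m2 : Qt}
    (axy : (collGraph H.Lines).Adj x y)
    (axz1 : (collGraph H.Lines).Adj x z1)
    (axz2 : (collGraph H.Lines).Adj x z2)
    (aym1 : (collGraph H.Lines).Adj y m1)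
    (aym2 : (collGraph H.Lines).Adj y m2)
    (hy2 : co e2 (ι y) = co e2 (ι x)) (hy3 : co e3 (ι y) = co e3 (ι x))
    (hy1 : co e1 (ι y) ≠ co e1 (ι x))
    (hz11 : co e1 (ι z1) = co e1 (ι x)) (hz13 : co e3 (ι z1) = co e3 (ι x))
    (hz12 : co e2 (ι z1) ≠ co e2 (ι x))
    (hz21 : co e1 (ι z2) = co e1 (ι x)) (hz23 : co e3 (ι z2) = co e3 (ι x))
    (hz22 : co e2 (ι z2) ≠ co e2 (ι x))
    (hzz : co e2 (ι z1) ≠ co e2 (ι z2))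
    (hm11 : co e1 (ι m1) = co e1 (ι y)) (hm13 : co e3 (ι m1) = co e3 (ι y))
    (hm12 : co e2 (ι m1) = co e2 (ι z1))
    (hm21 : co e1 (ι m2) = co e1 (ι y)) (hm23 : co e3 (ι m2) = co e3 (ι y))
    (hm22 : co e2 (ι m2) = co e2 (ι z2)) : False := by
  -- distance computations
  have dyz : ∀ z : Qt, co e1 (ι z) = co e1 (ι x) → co e3 (ι z) = co e3 (ι x) →
      co e2 (ι z) ≠ co e2 (ι x) → (collGraph H.Lines).Adj x z →
      (collGraph H.Lines).dist y z = 2 := by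
    intro z hc1 hc3 hc2 axz
    rw [← emb.isometric]
    have hne1 : co e1 (ι y) ≠ co e1 (ι z) := fun h => hy1 (h.trans hc1)
    have hne2 : co e2 (ι y) ≠ co e2 (ι z) := fun h => hc2 (h.symm.trans hy2)
    refine dist_two ((adj_map H ι emb axy).symm) (adj_map H ι emb axz) ?_ ?_
    · intro h; exact hne1 (by rw [h])
    · exact not_cubeAdj h12 hne1 hne2
  have dyz1 : (collGraph H.Lines).dist y z1 = 2 := dyz z1 hz11 hz13 hz12 axz1
  have dyz2 : (collGraph H.Lines).dist y z2 = 2 := dyz z2 hz21 hz23 hz22 axz2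
  -- m1 not adjacent to z1, m2 not adjacent to z2
  have nadj : ∀ m z : Qt, co e1 (ι m) = co e1 (ι y) →
      (collGraph H.Lines).dist y z = 2 → (collGraph H.Lines).Adj y m →
      (collGraph H.Lines).Adj x z → ¬ (collGraph H.Lines).Adj m z := by
    intro m z hc1 dy aym axz hmz
    obtain ⟨c, -, hun⟩ := gh y z dy
    have hx' := hun x ⟨axy.symm, axz⟩
    have hm' := hun m ⟨aym, hmz⟩
    have : m = x := hm'.trans hx'.symm
    rw [this] at hc1
    exact hy1 hc1.symm
  have nm1z1 : ¬ (collGraph H.Lines).Adj m1 z1 := nadj m1 z1 hm11 dyz1 aym1 axz1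
  have nm2z2 : ¬ (collGraph H.Lines).Adj m2 z2 := nadj m2 z2 hm21 dyz2 aym2 axz2
  -- coordinates of ι m1 vs ι z2
  have d1 : co e1 (ι m1) ≠ co e1 (ι z2) := by
    rw [hm11, hz21]; exact hy1
  have d2 : co e2 (ι m1) ≠ co e2 (ι z2) := by
    rw [hm12]; exact hzz
  -- dist m1 z2 = 2 in the cube, via ι z1
  have am1z1 : (collGraph L3cube).Adj (ι m1) (ι z1) := by
    refine cubeAdj_iff.mpr ⟨?_, e1, ?_⟩
    · intro h
      have : co e1 (ι m1) = co e1 (ι z1) := by rw [h]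
      rw [hm11, hz11] at this; exact hy1 this
    · intro i hi
      rcases cover i with rfl | rfl | rfl
      · exact absurd rfl hi
      · exact hm12
      · rw [hm13, hy3, hz13]
  have az1z2 : (collGraph L3cube).Adj (ι z1) (ι z2) := by
    refine cubeAdj_iff.mpr ⟨?_, e2, ?_⟩
    · intro h
      have : co e2 (ι z1) = co e2 (ι z2) := by rw [h]
      exact hzz this
    · intro i hi
      rcases cover i with rfl | rfl | rfl
      · rw [hz11, hz21]
      · exact absurd rfl hi
      · rw [hz13, hz23]
  have dm1z2 : (collGraph H.Lines).dist m1 z2 = 2 := by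
    rw [← emb.isometric]
    refine dist_two am1z1 az1z2 ?_ (not_cubeAdj h12 d1 d2)
    intro h; exact d1 (by rw [h])
  -- the common neighbor of m1, z2
  obtain ⟨c, ⟨acm1, acz2⟩, -⟩ := gh m1 z2 dm1z2
  have hcu : (collGraph L3cube).Adj (ι c) (ι m1) := (adj_map H ι emb acm1).symm
  have hcv : (collGraph L3cube).Adj (ι c) (ι z2) := adj_map H ι emb acz2
  rcases common_nbr h12 d1 d2 hcu hcv with ⟨hA, hB⟩ | ⟨hA, hB⟩
  · -- c = z1
    have hcz1 : ι c = ι z1 := by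
      apply pt_ext
      intro i
      rcases cover i with h | h | h
      · rw [h, hB e1 h12, hz21, hz11]
      · rw [h, hA e2 (Ne.symm h12), hm12]
      · rw [h, hB e3 (Ne.symm h23), hz23, hz13]
    rw [emb.inj hcz1] at acm1
    exact nm1z1 acm1
  · -- c = m2
    have hcm2 : ι c = ι m2 := by
      apply pt_ext
      intro i
      rcases cover i with h | h | h
      · rw [h, hA e1 h12, hm11, hm21]
      · rw [h, hB e2 (Ne.symm h12), ← hm22]
      · rw [h, hA e3 (Ne.symm h23), hm13, hm23]
    rw [emb.inj hcm2] at acz2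
    exact nm2z2 acz2

end Main

section Main2

variable {Qt : Type} (H : NearPolygon Qt 3) (ι : Qt → Pt)

lemma adjH_of_line {L : Set Qt} (hL : L ∈ H.Lines) {p q : Qt} (hp : p ∈ L) (hq : q ∈ L)
    (hne : p ≠ q) : (collGraph H.Lines).Adj p q := ⟨hne, L, hL, hp, hq⟩

/-- Main claim: if `x` lies on lines with directions `e1, e2`, then no other
point `y` of the direction-`e1` line through `x` lies on a line of direction `e2`. -/
lemma claim (emb : IsFullIsomEmb H.Lines L3cube ι) (hor : H.hasOrder 2 1)
    (gh : ∀ x y : Qt, (collGraph H.Lines).dist x y = 2 →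
      ∃! z : Qt, (collGraph H.Lines).Adj x z ∧ (collGraph H.Lines).Adj z y)
    {e1 e2 e3 : Fin 3} (h12 : e1 ≠ e2) (h13 : e1 ≠ e3) (h23 : e2 ≠ e3)
    (cover : ∀ i : Fin 3, i = e1 ∨ i = e2 ∨ i = e3)
    {x y : Qt} {L1 L2 M : Set Qt}
    (hL1 : L1 ∈ H.Lines) (hL2 : L2 ∈ H.Lines) (hM : M ∈ H.Lines)
    (hxL1 : x ∈ L1) (hxL2 : x ∈ L2) (hyL1 : y ∈ L1) (hyM : y ∈ M) (hyx : y ≠ x)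
    (himg1 : ι '' L1 = cline e1 (ι x)) (himg2 : ι '' L2 = cline e2 (ι x))
    (himgM : ι '' M = cline e2 (ι y)) : False := by
  -- coordinates of y
  have hyc : ι y ∈ cline e1 (ι x) := himg1 ▸ Set.mem_image_of_mem ι hyL1
  have hy2 : co e2 (ι y) = co e2 (ι x) := hyc e2 (Ne.symm h12)
  have hy3 : co e3 (ι y) = co e3 (ι x) := hyc e3 (Ne.symm h13)
  have hy1 : co e1 (ι y) ≠ co e1 (ι x) :=
    cline_ne hyc (mem_cline_self e1 (ι x)) (fun h => hyx (emb.inj h))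
  -- the other two points of L2
  obtain ⟨z1, z2, hz12, hxz1, hxz2, hL2eq⟩ := triple_rest (hor.1 L2 hL2) hxL2
  have hz1L2 : z1 ∈ L2 := by rw [hL2eq]; simp
  have hz2L2 : z2 ∈ L2 := by rw [hL2eq]; simp
  have hz1c : ι z1 ∈ cline e2 (ι x) := himg2 ▸ Set.mem_image_of_mem ι hz1L2
  have hz2c : ι z2 ∈ cline e2 (ι x) := himg2 ▸ Set.mem_image_of_mem ι hz2L2
  have hz11 : co e1 (ι z1) = co e1 (ι x) := hz1c e1 h12
  have hz13 : co e3 (ι z1) = co e3 (ι x) := hz1c e3 (Ne.symm h23)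
  have hz21 : co e1 (ι z2) = co e1 (ι x) := hz2c e1 h12
  have hz23 : co e3 (ι z2) = co e3 (ι x) := hz2c e3 (Ne.symm h23)
  have hz12' : co e2 (ι z1) ≠ co e2 (ι x) :=
    cline_ne hz1c (mem_cline_self e2 (ι x)) (fun h => hxz1 (emb.inj h).symm)
  have hz22' : co e2 (ι z2) ≠ co e2 (ι x) :=
    cline_ne hz2c (mem_cline_self e2 (ι x)) (fun h => hxz2 (emb.inj h).symm)
  have hzz : co e2 (ι z1) ≠ co e2 (ι z2) :=
    cline_ne hz1c hz2c (fun h => hz12 (emb.inj h))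
  -- the other two points of M
  obtain ⟨a, b, hab, hya, hyb, hMeq⟩ := triple_rest (hor.1 M hM) hyM
  have haM : a ∈ M := by rw [hMeq]; simp
  have hbM : b ∈ M := by rw [hMeq]; simp
  have hac : ι a ∈ cline e2 (ι y) := himgM ▸ Set.mem_image_of_mem ι haM
  have hbc : ι b ∈ cline e2 (ι y) := himgM ▸ Set.mem_image_of_mem ι hbM
  have ha1 : co e1 (ι a) = co e1 (ι y) := hac e1 h12
  have ha3 : co e3 (ι a) = co e3 (ι y) := hac e3 (Ne.symm h23)
  have hb1 : co e1 (ι b) = co e1 (ι y) := hbc e1 h12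
  have hb3 : co e3 (ι b) = co e3 (ι y) := hbc e3 (Ne.symm h23)
  have ha2 : co e2 (ι a) ≠ co e2 (ι x) := by
    have := cline_ne hac (mem_cline_self e2 (ι y)) (fun h => hya (emb.inj h).symm)
    rw [hy2] at this; exact this
  have hb2 : co e2 (ι b) ≠ co e2 (ι x) := by
    have := cline_ne hbc (mem_cline_self e2 (ι y)) (fun h => hyb (emb.inj h).symm)
    rw [hy2] at this; exact this
  have habne : co e2 (ι a) ≠ co e2 (ι b) :=
    cline_ne hac hbc (fun h => hab (emb.inj h))
  -- adjacencies
  have axy : (collGraph H.Lines).Adj x y := adjH_of_line H hL1 hxL1 hyL1 hyx.symm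
  have axz1 : (collGraph H.Lines).Adj x z1 := adjH_of_line H hL2 hxL2 hz1L2 hxz1
  have axz2 : (collGraph H.Lines).Adj x z2 := adjH_of_line H hL2 hxL2 hz2L2 hxz2
  have aya : (collGraph H.Lines).Adj y a := adjH_of_line H hM hyM haM hya
  have ayb : (collGraph H.Lines).Adj y b := adjH_of_line H hM hyM hbM hyb
  -- match a, b with z1, z2 by their e2-coordinates
  rcases fin3_choice hz12' hz22' hzz ha2 with hma | hma
  · have hmb : co e2 (ι b) = co e2 (ι z2) := by
      rcases fin3_choice hz12' hz22' hzz hb2 with h | h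
      · exact absurd (hma.trans h.symm) habne
      · exact h
    exact claim_core H ι emb gh h12 h13 h23 cover axy axz1 axz2 aya ayb
      hy2 hy3 hy1 hz11 hz13 hz12' hz21 hz23 hz22' hzz
      ha1 ha3 hma hb1 hb3 hmb
  · have hmb : co e2 (ι b) = co e2 (ι z1) := by
      rcases fin3_choice hz12' hz22' hzz hb2 with h | h
      · exact h
      · exact absurd (hma.trans h.symm) habne
    exact claim_core H ι emb gh h12 h13 h23 cover axy axz2 axz1 aya ayb
      hy2 hy3 hy1 hz21 hz23 hz22' hz11 hz13 hz12' (Ne.symm hzz)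
      ha1 ha3 hma hb1 hb3 hmb

end Main2


/-- The near hexagon `𝕃₃ × 𝕃₃ × 𝕃₃` contains no full
isometrically embedded subgeometry that is a generalized hexagon of order
`(2,1)` (a near hexagon of order `(2,1)` in which any two points at distance
`2` have exactly one common neighbor). -/
theorem no_H21_in_L3cube :
    ¬ ∃ (Qt : Type) (H : NearPolygon Qt 3) (ι : Qt → Fin 3 × Fin 3 × Fin 3),
        IsFullIsomEmb H.Lines L3cube ι ∧ H.hasOrder 2 1 ∧
        (∀ x y : Qt, (collGraph H.Lines).dist x y = 2 →
          ∃! z : Qt, (collGraph H.Lines).Adj x z ∧ (collGraph H.Lines).Adj z y) := by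
  rintro ⟨Qt, H, ι, emb, hor, gh⟩
  obtain ⟨x, -, -⟩ := H.diam_eq
  -- the two lines through x
  obtain ⟨L1, L2, hL12, hseteq⟩ := Set.ncard_eq_two.mp (hor.2 x)
  have hL1' : L1 ∈ H.Lines ∧ x ∈ L1 := by
    have : L1 ∈ {L | L ∈ H.Lines ∧ x ∈ L} := by rw [hseteq]; simp
    exact this
  have hL2' : L2 ∈ H.Lines ∧ x ∈ L2 := by
    have : L2 ∈ {L | L ∈ H.Lines ∧ x ∈ L} := by rw [hseteq]; simp
    exact this
  -- their directions
  obtain ⟨e1, q1, himg1₀⟩ := L3_eq_cline (emb.line_map L1 hL1'.1)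
  obtain ⟨e2, q2, himg2₀⟩ := L3_eq_cline (emb.line_map L2 hL2'.1)
  have hxc1 : ι x ∈ cline e1 q1 := himg1₀ ▸ Set.mem_image_of_mem ι hL1'.2
  have hxc2 : ι x ∈ cline e2 q2 := himg2₀ ▸ Set.mem_image_of_mem ι hL2'.2
  have himg1 : ι '' L1 = cline e1 (ι x) := himg1₀.trans (cline_eq_of_mem hxc1).symm
  have himg2 : ι '' L2 = cline e2 (ι x) := himg2₀.trans (cline_eq_of_mem hxc2).symm
  have h12 : e1 ≠ e2 := by
    rintro rfl
    exact hL12 (Set.image_injective.mpr emb.inj (himg1.trans himg2.symm))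
  obtain ⟨e3, h13, h23, cover⟩ := fin3_third e1 e2 h12
  -- the other two points of L1
  obtain ⟨y1, y2, hy12, hxy1, hxy2, hL1eq⟩ := triple_rest (hor.1 L1 hL1'.1) hL1'.2
  have hy1L1 : y1 ∈ L1 := by rw [hL1eq]; simp
  have hy2L1 : y2 ∈ L1 := by rw [hL1eq]; simp
  -- each yi lies on a second line, of direction e3
  have getM : ∀ y : Qt, y ∈ L1 → y ≠ x →
      ∃ M ∈ H.Lines, y ∈ M ∧ M ≠ L1 ∧ ι '' M = cline e3 (ι y) := by
    intro y hyL1 hyx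
    have hL1mem : L1 ∈ {L | L ∈ H.Lines ∧ y ∈ L} := ⟨hL1'.1, hyL1⟩
    obtain ⟨M, hMne, hseteq'⟩ := pair_rest (hor.2 y) hL1mem
    have hMmem : M ∈ {L | L ∈ H.Lines ∧ y ∈ L} := by rw [hseteq']; simp
    obtain ⟨hMline, hyM⟩ := hMmem
    obtain ⟨e, q, himgM₀⟩ := L3_eq_cline (emb.line_map M hMline)
    have hymem : ι y ∈ cline e q := himgM₀ ▸ Set.mem_image_of_mem ι hyM
    have himgM : ι '' M = cline e (ι y) := himgM₀.trans (cline_eq_of_mem hymem).symm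
    have hyc1 : ι y ∈ cline e1 (ι x) := himg1 ▸ Set.mem_image_of_mem ι hyL1
    have hne1 : e ≠ e1 := by
      rintro rfl
      have : ι '' M = ι '' L1 := himgM.trans ((cline_eq_of_mem hyc1).trans himg1.symm)
      exact hMne (Set.image_injective.mpr emb.inj this)
    have hne2 : e ≠ e2 := by
      rintro rfl
      exact claim H ι emb hor gh h12 h13 h23 cover hL1'.1 hL2'.1 hMline
        hL1'.2 hL2'.2 hyL1 hyM hyx himg1 himg2 himgM
    have he3 : e = e3 := ((cover e).resolve_left hne1).resolve_left hne2
    exact ⟨M, hMline, hyM, hMne, he3 ▸ himgM⟩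
  obtain ⟨M1, hM1line, hy1M1, hM1ne, himgM1⟩ := getM y1 hy1L1 hxy1.symm
  obtain ⟨M2, hM2line, hy2M2, hM2ne, himgM2⟩ := getM y2 hy2L1 hxy2.symm
  -- now apply the claim at y1 with lines L1 (dir e1) and M1 (dir e3)
  have hy1c : ι y1 ∈ cline e1 (ι x) := himg1 ▸ Set.mem_image_of_mem ι hy1L1
  have himg1' : ι '' L1 = cline e1 (ι y1) := himg1.trans (cline_eq_of_mem hy1c).symm
  have cover' : ∀ i : Fin 3, i = e1 ∨ i = e3 ∨ i = e2 := by
    intro i; rcases cover i with h | h | h <;> tauto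
  exact claim H ι emb hor gh h13 h12 (Ne.symm h23) cover' hL1'.1 hM1line hM2line
    hy1L1 hy1M1 hy2L1 hy2M2 hy12.symm himg1' himgM1 himgM2
end

section
/- Let N be a near polygon and let H be a full isometrically embedded subgeometry of N such that (i) any two points of H at distance 2 in H have exactly one common neighbor in H, and (ii) no point of N outside H is collinear with two distinct points of H. Then for every quad Q of N whose intersection with the point set of H is nonempty, this intersection is either a single point or the point set of a line of H. -/
/-- Let `H` be a full isometrically embedded subgeometry of a
near polygon `N` such that (i) any two points of `H` at distance `2` in `H`
have exactly one common neighbor in `H`, and (ii) no point of `N` outside `H`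
is collinear with two distinct points of `H`.  Then the intersection of any
quad of `N` with the point set of `H`, when nonempty, is a single point or
the point set of a line of `H`. -/
theorem quad_meets_subhexagon {Q P : Type*} {dQ dP : ℕ}
    (H : NearPolygon Q dQ) (N : NearPolygon P dP) (ι : Q → P)
    (emb : IsFullIsomEmb H.Lines N.Lines ι)
    (hmu : ∀ x y : Q, (collGraph H.Lines).dist x y = 2 →
      ∃! z : Q, (collGraph H.Lines).Adj x z ∧ (collGraph H.Lines).Adj z y)
    (hout : ∀ p : P, p ∉ Set.range ι → ∀ y1 y2 : Q,
      (collGraph N.Lines).Adj p (ι y1) → (collGraph N.Lines).Adj p (ι y2) → y1 = y2) :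
    ∀ S : Set P, IsQuad N.Lines S → (S ∩ Set.range ι).Nonempty →
      (∃ p : P, S ∩ Set.range ι = {p}) ∨
      (∃ L ∈ H.Lines, S ∩ Set.range ι = ι '' L) := by

  intro S hS hne
  obtain ⟨⟨hsub, hconv⟩, hdle, hd2, hGQ, h2l, hnc⟩ := hS
  have hdN : ∀ x y : P, x ≠ y → (collGraph N.Lines).dist x y ≠ 0 := by
    intro x y hxy h0
    exact hxy ((N.connected.dist_eq_zero_iff).mp h0)
  have hdH : ∀ x y : Q, x ≠ y → (collGraph H.Lines).dist x y ≠ 0 := by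
    intro x y hxy h0
    exact hxy ((H.connected.dist_eq_zero_iff).mp h0)
  -- key: two distinct points of the intersection are at H-distance 1
  have key : ∀ a b : Q, ι a ∈ S → ι b ∈ S → a ≠ b →
      (collGraph H.Lines).dist a b = 1 := by
    intro a b ha hb hab
    have hne' : ι a ≠ ι b := fun h => hab (emb.inj h)
    have hle : (collGraph N.Lines).dist (ι a) (ι b) ≤ 2 := hdle _ ha _ hb
    have h0 : (collGraph N.Lines).dist (ι a) (ι b) ≠ 0 := hdN _ _ hne'
    have hne2 : (collGraph N.Lines).dist (ι a) (ι b) ≠ 2 := by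
      intro h2
      have hnadj : ¬ (collGraph N.Lines).Adj (ι a) (ι b) := by
        intro h
        rw [SimpleGraph.dist_eq_one_iff_adj.mpr h] at h2
        omega
      obtain ⟨L₁, hL₁, L₂, hL₂, hL₁S, hL₂S, ha1, ha2, h12⟩ := h2l _ ha
      have hbL₁ : ι b ∉ L₁ := fun hbL => hnadj ⟨hne', L₁, hL₁, ha1, hbL⟩
      have hbL₂ : ι b ∉ L₂ := fun hbL => hnadj ⟨hne', L₂, hL₂, ha2, hbL⟩
      obtain ⟨c₁, ⟨hc₁L, hc₁adj⟩, hu₁⟩ := hGQ _ hb _ hL₁ hL₁S hbL₁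
      obtain ⟨c₂, ⟨hc₂L, hc₂adj⟩, hu₂⟩ := hGQ _ hb _ hL₂ hL₂S hbL₂
      have hc1a : c₁ ≠ ι a := fun h => hnadj (h ▸ hc₁adj).symm
      have hc2a : c₂ ≠ ι a := fun h => hnadj (h ▸ hc₂adj).symm
      have hcc : c₁ ≠ c₂ := by
        intro h
        exact h12 (N.unique_line _ hL₁ _ hL₂ c₁ (ι a) hc1a hc₁L ha1
          (h ▸ hc₂L) ha2)
      have hc₁r : c₁ ∈ Set.range ι := by
        by_contra hr
        exact hab (hout c₁ hr a b ⟨hc1a, L₁, hL₁, hc₁L, ha1⟩ hc₁adj.symm)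
      have hc₂r : c₂ ∈ Set.range ι := by
        by_contra hr
        exact hab (hout c₂ hr a b ⟨hc2a, L₂, hL₂, hc₂L, ha2⟩ hc₂adj.symm)
      obtain ⟨z₁, rfl⟩ := hc₁r
      obtain ⟨z₂, rfl⟩ := hc₂r
      have haz₁ : (collGraph H.Lines).Adj a z₁ := by
        rw [← SimpleGraph.dist_eq_one_iff_adj, ← emb.isometric]
        exact SimpleGraph.dist_eq_one_iff_adj.mpr ⟨hc1a.symm, L₁, hL₁, ha1, hc₁L⟩
      have haz₂ : (collGraph H.Lines).Adj a z₂ := by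
        rw [← SimpleGraph.dist_eq_one_iff_adj, ← emb.isometric]
        exact SimpleGraph.dist_eq_one_iff_adj.mpr ⟨hc2a.symm, L₂, hL₂, ha2, hc₂L⟩
      have hz₁b : (collGraph H.Lines).Adj z₁ b := by
        rw [← SimpleGraph.dist_eq_one_iff_adj, ← emb.isometric]
        exact SimpleGraph.dist_eq_one_iff_adj.mpr hc₁adj.symm
      have hz₂b : (collGraph H.Lines).Adj z₂ b := by
        rw [← SimpleGraph.dist_eq_one_iff_adj, ← emb.isometric]
        exact SimpleGraph.dist_eq_one_iff_adj.mpr hc₂adj.symm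
      have habH : (collGraph H.Lines).dist a b = 2 := by
        rw [← emb.isometric]; exact h2
      obtain ⟨z, hz, hzu⟩ := hmu a b habH
      exact hcc (congrArg ι ((hzu z₁ ⟨haz₁, hz₁b⟩).trans (hzu z₂ ⟨haz₂, hz₂b⟩).symm))
    have h1 : (collGraph N.Lines).dist (ι a) (ι b) = 1 := by omega
    rw [← emb.isometric]; exact h1
  by_cases hsing : ∃ p, S ∩ Set.range ι = {p}
  · exact Or.inl hsing
  · right
    obtain ⟨u, huS, hur⟩ := hne
    obtain ⟨a, rfl⟩ := hur
    have hv : ∃ v ∈ S ∩ Set.range ι, v ≠ ι a := by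
      by_contra h
      push_neg at h
      exact hsing ⟨ι a, Set.eq_singleton_iff_unique_mem.mpr
        ⟨⟨huS, a, rfl⟩, h⟩⟩
    obtain ⟨v, ⟨hvS, b, rfl⟩, hvne⟩ := hv
    have hba : b ≠ a := fun h => hvne (by rw [h])
    obtain ⟨-, L, hL, haL, hbL⟩ :=
      SimpleGraph.dist_eq_one_iff_adj.mp (key a b huS hvS hba.symm)
    refine ⟨L, hL, ?_⟩
    have hLN : ι '' L ∈ N.Lines := emb.line_map L hL
    have hLS : ι '' L ⊆ S :=
      hsub _ hLN (ι a) ⟨a, haL, rfl⟩ (ι b) ⟨b, hbL, rfl⟩ hvne.symm huS hvS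
    apply Set.Subset.antisymm
    · rintro p ⟨hpS, w, rfl⟩
      by_contra hw
      have hwL : w ∉ L := fun h => hw ⟨w, h, rfl⟩
      have hwa : w ≠ a := fun h => hwL (h ▸ haL)
      have hwb : w ≠ b := fun h => hwL (h ▸ hbL)
      have hda : (collGraph H.Lines).dist w a = 1 := key w a hpS huS hwa
      have hdb : (collGraph H.Lines).dist w b = 1 := key w b hpS hvS hwb
      obtain ⟨y, hy, hyu⟩ := H.near w L hL
      have hmin : ∀ z ∈ L, 1 ≤ (collGraph H.Lines).dist w z := by
        intro z hz
        have hwz : w ≠ z := fun h => hwL (h ▸ hz)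
        have := hdH w z hwz
        omega
      have haw : a = y := hyu a ⟨haL, fun z hz => by rw [hda]; exact hmin z hz⟩
      have hbw : b = y := hyu b ⟨hbL, fun z hz => by rw [hdb]; exact hmin z hz⟩
      exact hba (hbw.trans haw.symm)
    · rintro p ⟨w, hwL, rfl⟩
      exact ⟨hLS ⟨w, hwL, rfl⟩, w, rfl⟩
end
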